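/- arXiv:0910.0722 — 13 statements merged into one kernel-verified Lean document; each statement's English description precedes it below -/
import Mathlib

section
/- Let Σ be a p×p positive semidefinite matrix, S ⊆ {1,…,p} with |S| = s ≥ 1, and define ‖f_β‖² = βᵀΣβ. Let β* minimize β ↦ ‖f_β − f⁰‖² + λ‖β‖₁ where f⁰ = f_{β⁰} and β⁰ is supported on S. If the compatibility constant φ satisfies s‖f_β‖² ≥ φ²‖β_S‖₁² for all β with ‖β_{S^c}‖₁ ≤ ‖β_S‖₁, then ‖f_{β*} − f⁰‖² + λ‖β*_{S^c}‖₁ ≤ λ²s/φ². -/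
open Finset Matrix

/-- ℓ₁ norm of a vector. -/
noncomputable def l1 {p : ℕ} (v : Fin p → ℝ) : ℝ := ∑ j, |v j|

/-- Restriction of a vector to an index set (zero outside). -/
noncomputable def rV {p : ℕ} (S : Finset (Fin p)) (v : Fin p → ℝ) : Fin p → ℝ :=
  fun j => if j ∈ S then v j else 0

/-- Quadratic form ‖f_β‖² = βᵀ Σ β. -/
noncomputable def quad {p : ℕ} (M : Matrix (Fin p) (Fin p) ℝ) (v : Fin p → ℝ) : ℝ :=
  v ⬝ᵥ M.mulVec v

lemma l1_nonneg {p : ℕ} (v : Fin p → ℝ) : 0 ≤ l1 v :=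
  Finset.sum_nonneg fun _ _ => abs_nonneg _

lemma l1_split {p : ℕ} (S : Finset (Fin p)) (v : Fin p → ℝ) :
    l1 v = l1 (rV S v) + l1 (rV Sᶜ v) := by
  unfold l1 rV
  rw [← Finset.sum_add_distrib]
  refine Finset.sum_congr rfl fun j _ => ?_
  by_cases h : j ∈ S <;> simp [h, Finset.mem_compl]

/-- Noiseless Lasso oracle inequality under the compatibility condition. -/
theorem stmt0 {p s : ℕ} (hs : 1 ≤ s)
    (M : Matrix (Fin p) (Fin p) ℝ) (hM : M.PosSemidef)
    (S : Finset (Fin p)) (hScard : S.card = s)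
    (lam φ : ℝ) (hlam : 0 < lam) (hφ : 0 < φ)
    (β0 βstar : Fin p → ℝ) (hβ0 : ∀ j ∉ S, β0 j = 0)
    (hmin : ∀ β : Fin p → ℝ,
      quad M (βstar - β0) + lam * l1 βstar ≤ quad M (β - β0) + lam * l1 β)
    (hcompat : ∀ β : Fin p → ℝ, l1 (rV Sᶜ β) ≤ l1 (rV S β) →
      φ ^ 2 * (l1 (rV S β)) ^ 2 ≤ (s : ℝ) * quad M β) :
    quad M (βstar - β0) + lam * l1 (rV Sᶜ βstar) ≤ lam ^ 2 * s / φ ^ 2 := by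
  set Δ : Fin p → ℝ := βstar - β0 with hΔ
  have hQ0 : 0 ≤ quad M Δ := hM.dotProduct_mulVec_nonneg Δ
  -- rV Sᶜ Δ = rV Sᶜ βstar
  have hrc : rV Sᶜ Δ = rV Sᶜ βstar := by
    funext j
    unfold rV
    by_cases h : j ∈ Sᶜ
    · simp only [h, if_pos]
      have : β0 j = 0 := hβ0 j (Finset.mem_compl.mp h)
      simp [hΔ, this]
    · simp [h]
  -- basic inequality from minimality at β0
  have h0 : quad M Δ + lam * l1 βstar ≤ lam * l1 β0 := by
    have := hmin β0
    have hz : quad M (β0 - β0) = 0 := by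
      simp [quad, sub_self, Matrix.mulVec_zero]
    rw [hz, zero_add] at this
    exact this
  -- l1 β0 = l1 (rV S β0)
  have hβ0l1 : l1 β0 = l1 (rV S β0) := by
    rw [l1_split S β0]
    have : l1 (rV Sᶜ β0) = 0 := by
      unfold l1 rV
      refine Finset.sum_eq_zero fun j _ => ?_
      by_cases h : j ∈ Sᶜ
      · simp [h, hβ0 j (Finset.mem_compl.mp h)]
      · simp [h]
    rw [this, add_zero]
  -- triangle: l1 (rV S β0) ≤ l1 (rV S βstar) + l1 (rV S Δ)
  have htri : l1 (rV S β0) ≤ l1 (rV S βstar) + l1 (rV S Δ) := by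
    unfold l1 rV
    rw [← Finset.sum_add_distrib]
    refine Finset.sum_le_sum fun j _ => ?_
    by_cases h : j ∈ S
    · simp only [h, if_pos]
      have : β0 j = βstar j - (βstar j - β0 j) := by ring
      calc |β0 j| = |βstar j - (βstar j - β0 j)| := by rw [← this]
        _ ≤ |βstar j| + |βstar j - β0 j| := abs_sub _ _
        _ = |βstar j| + |Δ j| := by simp [hΔ, Pi.sub_apply]
    · simp [h]
  -- key inequality
  have hkey : quad M Δ + lam * l1 (rV Sᶜ Δ) ≤ lam * l1 (rV S Δ) := by
    have h1 : l1 βstar = l1 (rV S βstar) + l1 (rV Sᶜ βstar) := l1_split S βstar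
    rw [hrc]
    nlinarith [h0, htri, hβ0l1, hlam]
  set a := l1 (rV Sᶜ Δ) with ha
  set A := l1 (rV S Δ) with hA
  have ha0 : 0 ≤ a := l1_nonneg _
  have haA : a ≤ A := by nlinarith [hkey, hQ0, hlam]
  have hcomp : φ ^ 2 * A ^ 2 ≤ (s : ℝ) * quad M Δ := hcompat Δ haA
  have hs1 : (1 : ℝ) ≤ (s : ℝ) := by exact_mod_cast hs
  have hab : a = l1 (rV Sᶜ βstar) := by rw [ha, hrc]
  rw [le_div_iff₀ (by positivity : (0:ℝ) < φ ^ 2)]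
  -- L := quad M Δ + lam * l1 (rV Sᶜ βstar) ≤ lam * A
  have hL : quad M Δ + lam * l1 (rV Sᶜ βstar) ≤ lam * A := by rw [← hab]; exact hkey
  have hQL : quad M Δ ≤ lam * A := by
    have := l1_nonneg (rV Sᶜ βstar)
    nlinarith
  have hA0 : 0 ≤ A := le_trans ha0 haA
  rcases eq_or_lt_of_le hA0 with h | h
  · -- A = 0
    have : quad M Δ + lam * l1 (rV Sᶜ βstar) ≤ 0 := by rw [← h] at hL; linarith
    nlinarith [sq_nonneg lam, hs1, hφ]
  · -- A > 0
    have h1 : φ ^ 2 * A ≤ (s : ℝ) * lam := by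
      have : φ ^ 2 * A ^ 2 ≤ (s : ℝ) * (lam * A) := le_trans hcomp (by nlinarith)
      nlinarith
    nlinarith [mul_le_mul_of_nonneg_left hL (sq_nonneg φ)]
end

section
/- Under the compatibility condition with constant φ for the set S, the noiseless Lasso solution β* satisfies the ℓ₁-bound ‖β* − β⁰‖₁ ≤ 2λs/φ². -/
open Finset Matrix

lemma l1_rV {p : ℕ} (S : Finset (Fin p)) (v : Fin p → ℝ) :
    l1 (rV S v) = ∑ j ∈ S, |v j| := by
  unfold l1 rV
  rw [← Finset.sum_add_sum_compl S]
  have h1 : ∀ j ∈ S, |if j ∈ S then v j else 0| = |v j| := by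
    intro j hj; simp [hj]
  have h2 : ∀ j ∈ Sᶜ, |if j ∈ S then v j else 0| = 0 := by
    intro j hj; simp [Finset.mem_compl.mp hj]
  rw [Finset.sum_congr rfl h1, Finset.sum_congr rfl h2]
  simp

/-- ℓ₁-estimation bound for the noiseless Lasso under the compatibility condition. -/
theorem stmt1 {p s : ℕ} (hs : 1 ≤ s)
    (M : Matrix (Fin p) (Fin p) ℝ) (hM : M.PosSemidef)
    (S : Finset (Fin p)) (hScard : S.card = s)
    (lam φ : ℝ) (hlam : 0 < lam) (hφ : 0 < φ)
    (β0 βstar : Fin p → ℝ) (hβ0 : ∀ j ∉ S, β0 j = 0)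
    (hmin : ∀ β : Fin p → ℝ,
      quad M (βstar - β0) + lam * l1 βstar ≤ quad M (β - β0) + lam * l1 β)
    (hcompat : ∀ β : Fin p → ℝ, l1 (rV Sᶜ β) ≤ l1 (rV S β) →
      φ ^ 2 * (l1 (rV S β)) ^ 2 ≤ (s : ℝ) * quad M β) :
    l1 (βstar - β0) ≤ 2 * lam * s / φ ^ 2 := by
  set Δ : Fin p → ℝ := βstar - β0 with hΔ
  set aS : ℝ := ∑ j ∈ S, |Δ j| with haS
  set aC : ℝ := ∑ j ∈ Sᶜ, |Δ j| with haC
  have haS0 : 0 ≤ aS := Finset.sum_nonneg fun j _ => abs_nonneg _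
  have haC0 : 0 ≤ aC := Finset.sum_nonneg fun j _ => abs_nonneg _
  have hl1Δ : l1 Δ = aS + aC := by
    unfold l1; rw [← Finset.sum_add_sum_compl S]
  have hq0 : 0 ≤ quad M Δ := by
    have := hM.dotProduct_mulVec_nonneg Δ
    simpa [quad] using this
  -- key inequality from minimality at β0
  have hkey : quad M Δ + lam * aC ≤ lam * aS := by
    have h := hmin β0
    have hzero : quad M (β0 - β0) = 0 := by
      simp [quad, sub_self]
    rw [hzero, zero_add] at h
    have hβ0l1 : l1 β0 = ∑ j ∈ S, |β0 j| := by
      unfold l1; rw [← Finset.sum_add_sum_compl S]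
      have : ∑ j ∈ Sᶜ, |β0 j| = 0 := by
        apply Finset.sum_eq_zero; intro j hj
        rw [hβ0 j (Finset.mem_compl.mp hj)]; simp
      rw [this, add_zero]
    have hβsl1 : l1 βstar = ∑ j ∈ S, |βstar j| + aC := by
      unfold l1; rw [← Finset.sum_add_sum_compl S]
      congr 1
      apply Finset.sum_congr rfl; intro j hj
      have : Δ j = βstar j := by
        simp [hΔ, hβ0 j (Finset.mem_compl.mp hj)]
      rw [this]
    rw [hβ0l1, hβsl1] at h
    have htri : ∑ j ∈ S, |β0 j| - ∑ j ∈ S, |βstar j| ≤ aS := by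
      rw [haS, ← Finset.sum_sub_distrib]
      apply Finset.sum_le_sum; intro j _
      have : Δ j = βstar j - β0 j := by simp [hΔ]
      rw [this]
      have := abs_sub_abs_le_abs_sub (β0 j) (βstar j)
      rw [abs_sub_comm] at this
      linarith
    nlinarith
  have haCS : aC ≤ aS := by nlinarith
  have hcomp := hcompat Δ (by rw [l1_rV, l1_rV]; exact haCS)
  rw [l1_rV] at hcomp
  -- hcomp : φ^2 * aS^2 ≤ s * quad M Δ
  have hquadle : quad M Δ ≤ lam * aS := by nlinarith
  have hs' : (1 : ℝ) ≤ (s : ℝ) := by exact_mod_cast hs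
  rcases eq_or_lt_of_le haS0 with h0 | hpos
  · -- aS = 0
    have hC : aC ≤ 0 := by nlinarith
    have : l1 Δ = 0 := by rw [hl1Δ, ← h0]; linarith
    rw [this]
    positivity
  · have hφaS : φ ^ 2 * aS ≤ lam * s := by
      have : φ ^ 2 * aS * aS ≤ lam * s * aS := by nlinarith
      exact le_of_mul_le_mul_right this hpos
    have hφ2 : (0:ℝ) < φ ^ 2 := by positivity
    rw [hl1Δ, le_div_iff₀ hφ2]
    nlinarith
end

section
/- Let Σ be positive semidefinite, S ⊆ {1,…,p}, N ≥ |S|, L > 0. Suppose the restricted regression constant ϑ(S,N) = max{ |⟨f_{β_N}, f_{β_{N^c}}⟩|/‖f_{β_N}‖² : N ⊇ S, |N| ≤ N, β ∈ R(1,S,N) } satisfies ϑ(S,N) < 1/L, and the uniform eigenvalue is Λ²(S,N) = min{ λ_min(Σ_{N,N}) : N ⊇ S, |N| ≤ N }. Then the restricted eigenvalue satisfies φ²(L,S,N) ≥ (1 − Lϑ(S,N))² Λ²(S,N). -/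
open Finset Matrix

/-- squared ℓ₂ norm of a vector. -/
noncomputable def l2sq {p : ℕ} (v : Fin p → ℝ) : ℝ := ∑ j, (v j) ^ 2

/-- Inner product ⟨f_u, f_v⟩ = uᵀ Σ v. -/
noncomputable def quad2 {p : ℕ} (M : Matrix (Fin p) (Fin p) ℝ) (u v : Fin p → ℝ) : ℝ :=
  u ⬝ᵥ M.mulVec v

set_option maxHeartbeats 1000000 in
/-- The restricted regression condition implies the restricted eigenvalue condition:
if ϑ(L,S,N) = Lϑ(S,N) with Lϑ(S,N) < 1, then φ²(L,S,N) ≥ (1 − Lϑ(S,N))² Λ²(S,N). -/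
theorem stmt4 {p : ℕ} (M : Matrix (Fin p) (Fin p) ℝ) (hM : M.PosSemidef)
    (S : Finset (Fin p)) (Nb : ℕ) (hNb : S.card ≤ Nb)
    (L ϑ Λ : ℝ) (hL : 0 < L) (hΛ : 0 < Λ) (hϑ0 : 0 ≤ ϑ) (hϑ : L * ϑ < 1)
    -- restricted regression constant bound: ϑ(L,S,N) ≤ L·ϑ
    (hreg : ∀ Ns : Finset (Fin p), S ⊆ Ns → Ns.card ≤ Nb →
      ∀ β : Fin p → ℝ, l1 (rV Sᶜ β) ≤ L * l1 (rV S β) →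
      (∀ j ∉ Ns, ∀ i ∈ Ns \ S, |β j| ≤ |β i|) →
      |quad2 M (rV Ns β) (rV Nsᶜ β)| ≤ L * ϑ * quad M (rV Ns β))
    -- uniform eigenvalue: Λ²(S,N) ≥ Λ²
    (heig : ∀ Ns : Finset (Fin p), S ⊆ Ns → Ns.card ≤ Nb →
      ∀ v : Fin p → ℝ, (∀ j ∉ Ns, v j = 0) → Λ ^ 2 * l2sq v ≤ quad M v) :
    -- restricted eigenvalue bound: φ²(L,S,N) ≥ (1 − Lϑ)²Λ²
    ∀ Ns : Finset (Fin p), S ⊆ Ns → Ns.card ≤ Nb →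
      ∀ β : Fin p → ℝ, l1 (rV Sᶜ β) ≤ L * l1 (rV S β) →
      (∀ j ∉ Ns, ∀ i ∈ Ns \ S, |β j| ≤ |β i|) →
      (1 - L * ϑ) ^ 2 * Λ ^ 2 * l2sq (rV Ns β) ≤ quad M β := by

  intro Ns hSN hcard β hl1 hmono
  set u := rV Ns β with hu
  set v := rV Nsᶜ β with hv
  have hsym : ∀ x y : Fin p → ℝ, x ⬝ᵥ M.mulVec y = y ⬝ᵥ M.mulVec x := by
    intro x y
    have ht : Mᵀ = M := by
      have := hM.1.eq
      rwa [Matrix.conjTranspose_eq_transpose_of_trivial] at this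
    rw [Matrix.dotProduct_mulVec, ← Matrix.mulVec_transpose, ht, dotProduct_comm]
  have hnn : ∀ w : Fin p → ℝ, 0 ≤ quad M w := fun w => by
    have := hM.dotProduct_mulVec_nonneg w; simpa [quad] using this
  have hβ : β = u + v := by
    funext j
    by_cases h : j ∈ Ns <;> simp [hu, hv, rV, Finset.mem_compl, h]
  have hexp : quad M β = quad M u + 2 * quad2 M u v + quad M v := by
    conv_lhs => rw [hβ]
    simp only [quad, quad2, Matrix.mulVec_add, dotProduct_add, add_dotProduct]
    rw [hsym v u]; ring
  have hq : ∀ t : ℝ, 0 ≤ quad M v * (t * t) + 2 * quad2 M u v * t + quad M u := by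
    intro t
    have h0 := hnn (u + t • v)
    have heq : quad M (u + t • v)
        = quad M v * (t * t) + 2 * quad2 M u v * t + quad M u := by
      simp only [quad, quad2, Matrix.mulVec_add, Matrix.mulVec_smul, dotProduct_add,
        add_dotProduct, dotProduct_smul, smul_dotProduct, smul_eq_mul]
      rw [hsym v u]; ring
    linarith [heq ▸ h0]
  have hd := discrim_le_zero hq
  rw [discrim] at hd
  have hCS : (quad2 M u v) ^ 2 ≤ quad M u * quad M v := by nlinarith [hd]
  have hb := hreg Ns hSN hcard β hl1 hmono
  have h2 : Λ ^ 2 * l2sq u ≤ quad M u := by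
    apply heig Ns hSN hcard
    intro j hj; simp [hu, rV, hj]
  set a := quad M u
  set b := quad2 M u v
  set c := quad M v
  set t := L * ϑ with htdef
  have ha : 0 ≤ a := hnn u
  have hc : 0 ≤ c := hnn v
  have hb1 : -(t * a) ≤ b := by
    have := (abs_le.1 hb).1; linarith
  have h1 : (1 - t) ^ 2 * a ≤ a + 2 * b + c := by
    rcases ha.lt_or_eq with hapos | ha0
    · have h3 : (1 - t) * a ≤ a + b := by nlinarith
      have h4 : 0 ≤ (1 - t) * a := by nlinarith
      have h5 : ((1 - t) * a) ^ 2 ≤ (a + b) ^ 2 := by nlinarith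
      have h6 : (a + b) ^ 2 ≤ a * (a + 2 * b + c) := by nlinarith [hCS]
      nlinarith [h5, h6, hapos]
    · have hb2 : b ^ 2 ≤ 0 := by nlinarith [hCS]
      have hb0 : b = 0 := sq_eq_zero_iff.mp (le_antisymm hb2 (sq_nonneg b))
      rw [← ha0, hb0]
      nlinarith [hc]
  have hl2 : 0 ≤ l2sq u := by
    unfold l2sq; positivity
  rw [hexp]
  nlinarith [mul_le_mul_of_nonneg_left h2 (sq_nonneg (1 - t)), h1]
end

section
/- With Λ²(S,s) = λ_min(Σ_{S,S}) > 0 and |S| = s, the adaptive restricted regression constant satisfies ϑ_adaptive(S,s) ≤ √s · √(Σ_{k∈S} (Σ_{j∉S} |σ_{j,k}|)²) / Λ²(S,s), i.e., the cumulative coherence condition implies the adaptive restricted regression condition. -/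
open Finset Matrix

/-- Cumulative coherence bound on the adaptive restricted regression constant:
ϑ_adaptive(S,s) ≤ √s · √(∑_{k∈S} (∑_{j∉S} |σ_{j,k}|)²) / Λ²(S,s). -/
theorem stmt6 {p : ℕ} (M : Matrix (Fin p) (Fin p) ℝ) (hM : M.PosSemidef)
    (S : Finset (Fin p)) (Λsq : ℝ) (hΛ : 0 < Λsq)
    -- Λ²(S,s) = λ_min(Σ_{S,S}) ≥ Λsq
    (heig : ∀ v : Fin p → ℝ, (∀ j ∉ S, v j = 0) → Λsq * l2sq v ≤ quad M v) :
    ∀ β : Fin p → ℝ,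
      l1 (rV Sᶜ β) ≤ Real.sqrt S.card * Real.sqrt (l2sq (rV S β)) →
      |quad2 M (rV Sᶜ β) (rV S β)| ≤
        (Real.sqrt S.card * Real.sqrt (∑ k ∈ S, (∑ j ∈ Sᶜ, |M j k|) ^ 2) / Λsq) *
          quad M (rV S β) := by

  intro β hβ
  set u := rV Sᶜ β with hu
  set w := rV S β with hw
  have hw0 : ∀ j ∉ S, w j = 0 := fun j hj => if_neg hj
  have hu0 : ∀ j ∈ S, u j = 0 := fun j hj => if_neg (by simpa using hj)
  have hquad : Λsq * l2sq w ≤ quad M w := heig w hw0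
  set m : Fin p → ℝ := fun k => ∑ j ∈ Sᶜ, |M j k| with hm
  set C : ℝ := Real.sqrt (∑ k ∈ S, (m k) ^ 2) with hC
  have hCnn : 0 ≤ C := Real.sqrt_nonneg _
  set t : ℝ := l2sq w with ht
  have htnn : 0 ≤ t := Finset.sum_nonneg fun i _ => sq_nonneg _
  have hsnn : (0:ℝ) ≤ Real.sqrt S.card := Real.sqrt_nonneg _
  set K : ℝ := ∑ k ∈ S, m k * |w k| with hK
  have hmnn : ∀ k, 0 ≤ m k := fun k => Finset.sum_nonneg fun j _ => abs_nonneg _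
  have hKnn : 0 ≤ K := Finset.sum_nonneg fun k _ => mul_nonneg (hmnn k) (abs_nonneg _)
  -- Step A: |quad2| ≤ l1 u * K
  have stepA : |quad2 M u w| ≤ l1 u * K := by
    have h1 : |quad2 M u w| ≤ ∑ j, |u j| * |(M.mulVec w) j| := by
      rw [quad2, dotProduct]
      refine le_trans (Finset.abs_sum_le_sum_abs _ _) ?_
      exact le_of_eq (Finset.sum_congr rfl fun j _ => abs_mul _ _)
    refine h1.trans ?_
    have h2 : ∀ j, |u j| * |(M.mulVec w) j| ≤ |u j| * K := by
      intro j
      rcases eq_or_ne (u j) 0 with h | h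
      · simp [h, hKnn]
      · have hjS : j ∉ S := by
          by_contra hjS
          exact h (hu0 j hjS)
        refine mul_le_mul_of_nonneg_left ?_ (abs_nonneg _)
        have hmv : (M.mulVec w) j = ∑ k ∈ S, M j k * w k := by
          rw [Matrix.mulVec, dotProduct]
          rw [← Finset.sum_subset (Finset.subset_univ S)]
          intro k _ hk
          rw [hw0 k hk, mul_zero]
        rw [hmv]
        refine le_trans (Finset.abs_sum_le_sum_abs _ _) ?_
        refine Finset.sum_le_sum fun k hk => ?_
        rw [abs_mul]
        refine mul_le_mul_of_nonneg_right ?_ (abs_nonneg _)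
        exact Finset.single_le_sum (f := fun j => |M j k|)
          (fun j _ => abs_nonneg _) (Finset.mem_compl.mpr hjS)
      
    calc ∑ j, |u j| * |(M.mulVec w) j| ≤ ∑ j, |u j| * K :=
          Finset.sum_le_sum fun j _ => h2 j
      _ = l1 u * K := by rw [l1, Finset.sum_mul]
  -- Step B: K ≤ C * √t
  have stepB : K ≤ C * Real.sqrt t := by
    have hcs := Real.sum_mul_le_sqrt_mul_sqrt S m (fun k => |w k|)
    have ht' : ∑ k ∈ S, w k ^ 2 = t := by
      rw [ht, l2sq]
      refine Finset.sum_subset (Finset.subset_univ S) ?_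
      intro k _ hk; rw [hw0 k hk]; ring
    simpa [hK, hC, ht'] using hcs
  -- combine
  have hl1nn : 0 ≤ l1 u := Finset.sum_nonneg fun j _ => abs_nonneg _
  have main : |quad2 M u w| ≤ Real.sqrt S.card * C * t := by
    calc |quad2 M u w| ≤ l1 u * K := stepA
      _ ≤ (Real.sqrt S.card * Real.sqrt t) * (C * Real.sqrt t) := by
          exact mul_le_mul hβ stepB hKnn (mul_nonneg hsnn (Real.sqrt_nonneg _))
      _ = Real.sqrt S.card * C * (Real.sqrt t * Real.sqrt t) := by ring
      _ = Real.sqrt S.card * C * t := by rw [Real.mul_self_sqrt htnn]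
  refine main.trans ?_
  rw [div_mul_eq_mul_div, le_div_iff₀ hΛ]
  calc Real.sqrt S.card * C * t * Λsq = Real.sqrt S.card * C * (Λsq * t) := by ring
    _ ≤ Real.sqrt S.card * C * quad M w :=
        mul_le_mul_of_nonneg_left hquad (mul_nonneg hsnn hCnn)
end

section
/- Let β* be the noiseless Lasso solution with KKT vector τ* (i.e., 2Σ(β* − β⁰) = −λτ*, ‖τ*‖_∞ ≤ 1, τ*_j = sign(β*_j) whenever β*_j ≠ 0). Let N ⊇ S with Σ_{N,N} invertible. Then 2‖(f_{β*_{N^c}})^{A_N}‖² = λ(β*_{N^c})ᵀ Σ_{N^c,N} Σ_{N,N}^{-1} τ*_N − λ‖β*_{N^c}‖₁, where ‖(f_{β_{N^c}})^{A_N}‖² = β_{N^c}ᵀ Σ_{N^c,N^c} β_{N^c} − β_{N^c}ᵀ Σ_{N^c,N} Σ_{N,N}^{-1} Σ_{N,N^c} β_{N^c} is the squared norm of the anti-projection. -/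
open Finset Matrix

/-- Σ_{N,N}. -/
noncomputable def sub11 {p : ℕ} (M : Matrix (Fin p) (Fin p) ℝ) (N : Finset (Fin p)) :
    Matrix {x : Fin p // x ∈ N} {x : Fin p // x ∈ N} ℝ :=
  M.submatrix Subtype.val Subtype.val

/-- Σ_{N^c,N}. -/
noncomputable def sub21 {p : ℕ} (M : Matrix (Fin p) (Fin p) ℝ) (N : Finset (Fin p)) :
    Matrix {x : Fin p // x ∉ N} {x : Fin p // x ∈ N} ℝ :=
  M.submatrix Subtype.val Subtype.val

/-- Σ_{N,N^c}. -/
noncomputable def sub12 {p : ℕ} (M : Matrix (Fin p) (Fin p) ℝ) (N : Finset (Fin p)) :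
    Matrix {x : Fin p // x ∈ N} {x : Fin p // x ∉ N} ℝ :=
  M.submatrix Subtype.val Subtype.val

/-- Σ_{N^c,N^c}. -/
noncomputable def sub22 {p : ℕ} (M : Matrix (Fin p) (Fin p) ℝ) (N : Finset (Fin p)) :
    Matrix {x : Fin p // x ∉ N} {x : Fin p // x ∉ N} ℝ :=
  M.submatrix Subtype.val Subtype.val

/-- v_N as a vector indexed by N. -/
noncomputable def vecIn {p : ℕ} (N : Finset (Fin p)) (v : Fin p → ℝ) :
    {x : Fin p // x ∈ N} → ℝ := fun i => v i.val

/-- v_{N^c} as a vector indexed by N^c. -/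
noncomputable def vecOut {p : ℕ} (N : Finset (Fin p)) (v : Fin p → ℝ) :
    {x : Fin p // x ∉ N} → ℝ := fun i => v i.val

/-- KKT identity: 2‖(f_{β*_{N^c}})^{A_N}‖² =
λ(β*_{N^c})ᵀ Σ_{N^c,N} Σ_{N,N}^{-1} τ*_N − λ‖β*_{N^c}‖₁. -/
theorem stmt8 {p : ℕ} (M : Matrix (Fin p) (Fin p) ℝ) (hM : M.PosSemidef)
    (S N : Finset (Fin p)) (hSN : S ⊆ N)
    (lam : ℝ) (hlam : 0 < lam)
    (β0 βstar τ : Fin p → ℝ) (hβ0 : ∀ j ∉ S, β0 j = 0)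
    -- KKT conditions for the noiseless Lasso
    (hkkt : ∀ j, 2 * M.mulVec (βstar - β0) j = -(lam * τ j))
    (hτ1 : ∀ j, |τ j| ≤ 1)
    (hτsign : ∀ j, βstar j ≠ 0 → τ j = Real.sign (βstar j))
    -- Σ_{N,N} is invertible
    (hA : IsUnit (sub11 M N).det) :
    2 * (vecOut N βstar ⬝ᵥ (sub22 M N).mulVec (vecOut N βstar)
        - vecOut N βstar ⬝ᵥ (sub21 M N).mulVec
            ((sub11 M N)⁻¹.mulVec ((sub12 M N).mulVec (vecOut N βstar))))
      = lam * (vecOut N βstar ⬝ᵥ (sub21 M N).mulVec ((sub11 M N)⁻¹.mulVec (vecIn N τ)))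
        - lam * l1 (rV Nᶜ βstar) := by
  classical
  set δ : Fin p → ℝ := βstar - β0 with hδ
  set b := vecOut N βstar with hb
  have hδout : vecOut N δ = b := by
    funext j
    have : β0 j.val = 0 := hβ0 j.val (fun h => j.prop (hSN h))
    simp [vecOut, hδ, hb, this]
  -- split mulVec into the two blocks
  have hsplit : ∀ v : Fin p → ℝ, ∀ j : Fin p, M.mulVec v j =
      (∑ k : {x : Fin p // x ∈ N}, M j k.val * v k.val) +
      (∑ k : {x : Fin p // x ∉ N}, M j k.val * v k.val) := by
    intro v j
    rw [Matrix.mulVec, dotProduct]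
    have h := (Fintype.sum_subtype_add_sum_subtype (· ∈ N) (fun k => M j k * v k)).symm
    convert h using 2
    exact Finset.sum_congr (congrArg (@Finset.univ _) (Subsingleton.elim _ _)) fun _ _ => rfl
  have hmv11 : ∀ j : {x : Fin p // x ∈ N},
      (sub11 M N).mulVec (vecIn N δ) j = ∑ k : {x : Fin p // x ∈ N}, M j.val k.val * δ k.val := by
    intro j; rfl
  have hmv12 : ∀ j : {x : Fin p // x ∈ N},
      (sub12 M N).mulVec b j = ∑ k : {x : Fin p // x ∉ N}, M j.val k.val * δ k.val := by
    intro j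
    rw [← hδout]; rfl
  have hmv21 : ∀ j : {x : Fin p // x ∉ N},
      (sub21 M N).mulVec (vecIn N δ) j = ∑ k : {x : Fin p // x ∈ N}, M j.val k.val * δ k.val := by
    intro j; rfl
  have hmv22 : ∀ j : {x : Fin p // x ∉ N},
      (sub22 M N).mulVec b j = ∑ k : {x : Fin p // x ∉ N}, M j.val k.val * δ k.val := by
    intro j
    rw [← hδout]; rfl
  -- KKT on the N block
  have heqN : (sub11 M N).mulVec (vecIn N δ)
      = (-(lam/2)) • vecIn N τ - (sub12 M N).mulVec b := by
    funext j
    have h1 := hkkt j.val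
    rw [hsplit δ j.val] at h1
    have h2 := hmv11 j
    have h3 := hmv12 j
    simp only [Pi.sub_apply, Pi.smul_apply, smul_eq_mul, vecIn]
    linarith
  have hdN : vecIn N δ
      = (sub11 M N)⁻¹.mulVec ((-(lam/2)) • vecIn N τ - (sub12 M N).mulVec b) := by
    rw [← heqN, Matrix.mulVec_mulVec, Matrix.nonsing_inv_mul _ hA, Matrix.one_mulVec]
  -- KKT on the N^c block, dotted with b
  have heqC : ∀ j : {x : Fin p // x ∉ N},
      2 * ((sub21 M N).mulVec (vecIn N δ) j + (sub22 M N).mulVec b j) = -(lam * τ j.val) := by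
    intro j
    have h1 := hkkt j.val
    rw [hsplit δ j.val] at h1
    rw [hmv21 j, hmv22 j]
    linarith
  -- ℓ₁ identity
  have habs : ∀ j : {x : Fin p // x ∉ N}, βstar j.val * τ j.val = |βstar j.val| := by
    intro j
    by_cases h : βstar j.val = 0
    · simp [h]
    · rw [hτsign j.val h]
      rcases lt_or_gt_of_ne h with hlt | hgt
      · rw [Real.sign_of_neg hlt, abs_of_neg hlt]; ring
      · rw [Real.sign_of_pos hgt, abs_of_pos hgt]; ring
  have hl1 : l1 (rV Nᶜ βstar) = ∑ j : {x : Fin p // x ∉ N}, |βstar j.val| := by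
    rw [l1, ← Fintype.sum_subtype_add_sum_subtype (· ∈ N) (fun j => |rV Nᶜ βstar j|)]
    have h1 : ∀ j : {x : Fin p // x ∈ N}, |rV Nᶜ βstar j.val| = 0 := by
      intro j; simp [rV, j.prop]
    have h2 : ∀ j : {x : Fin p // x ∉ N}, |rV Nᶜ βstar j.val| = |βstar j.val| := by
      intro j; simp [rV, j.prop]
    rw [Finset.sum_congr rfl (fun j _ => h1 j), Finset.sum_congr rfl (fun j _ => h2 j)]
    simp
  have hdot : 2 * (b ⬝ᵥ (sub21 M N).mulVec (vecIn N δ)) + 2 * (b ⬝ᵥ (sub22 M N).mulVec b)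
      = -(lam * l1 (rV Nᶜ βstar)) := by
    have : ∑ j : {x : Fin p // x ∉ N},
        b j * (2 * ((sub21 M N).mulVec (vecIn N δ) j + (sub22 M N).mulVec b j))
        = ∑ j : {x : Fin p // x ∉ N}, b j * (-(lam * τ j.val)) :=
      Finset.sum_congr rfl (fun j _ => by rw [heqC j])
    have hlhs : ∑ j : {x : Fin p // x ∉ N},
        b j * (2 * ((sub21 M N).mulVec (vecIn N δ) j + (sub22 M N).mulVec b j))
        = 2 * (b ⬝ᵥ (sub21 M N).mulVec (vecIn N δ)) + 2 * (b ⬝ᵥ (sub22 M N).mulVec b) := by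
      simp only [dotProduct, Finset.mul_sum]
      rw [← Finset.sum_add_distrib]
      exact Finset.sum_congr rfl (fun j _ => by ring)
    have hrhs : ∑ j : {x : Fin p // x ∉ N}, b j * (-(lam * τ j.val))
        = -(lam * l1 (rV Nᶜ βstar)) := by
      rw [hl1, Finset.mul_sum, ← Finset.sum_neg_distrib]
      exact Finset.sum_congr rfl (fun j _ => by
        rw [← habs j]; simp [hb, vecOut]; ring)
    rw [← hlhs, this, hrhs]
  -- expand b ⬝ Σ21 dN using hdN
  have hexp : b ⬝ᵥ (sub21 M N).mulVec (vecIn N δ)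
      = (-(lam/2)) * (b ⬝ᵥ (sub21 M N).mulVec ((sub11 M N)⁻¹.mulVec (vecIn N τ)))
        - b ⬝ᵥ (sub21 M N).mulVec ((sub11 M N)⁻¹.mulVec ((sub12 M N).mulVec b)) := by
    rw [hdN, Matrix.mulVec_sub, Matrix.mulVec_sub, Matrix.mulVec_smul, Matrix.mulVec_smul,
      dotProduct_sub, dotProduct_smul]
    simp [smul_eq_mul]
  rw [hexp] at hdot
  linarith
end

section
/- Suppose for some N ⊇ S with |N| ≤ N, Σ_{N,N} is invertible and sup_{‖τ_N‖_∞ ≤ 1} ‖Σ_{N^c,N} Σ_{N,N}^{-1} τ_N‖_∞ < 1. Then the noiseless Lasso solution β* satisfies β*_{N^c} = 0; in particular the active set S_* of β* satisfies |S_* ∖ S| ≤ |N| − s. -/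
open Finset Matrix

private lemma splitSum {p : ℕ} (N : Finset (Fin p)) (f : Fin p → ℝ) :
    ∑ j, f j = (∑ j : {x : Fin p // x ∈ N}, f j) + ∑ j : {x : Fin p // x ∉ N}, f j := by
  rw [← Finset.sum_add_sum_compl N f, ← Finset.sum_coe_sort N f,
    Finset.sum_subtype Nᶜ (fun x => Finset.mem_compl) f]

private lemma rowSplit {p : ℕ} (M : Matrix (Fin p) (Fin p) ℝ) (N : Finset (Fin p))
    (v : Fin p → ℝ) (j : Fin p) :
    M.mulVec v j = (∑ k : {x : Fin p // x ∈ N}, M j k.val * v k.val)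
      + ∑ k : {x : Fin p // x ∉ N}, M j k.val * v k.val := by
  show ∑ k, M j k * v k = _
  exact splitSum N _

/-- If for some N ⊇ S the strict uniform irrepresentable condition
sup_{‖τ_N‖_∞ ≤ 1} ‖Σ_{N^c,N} Σ_{N,N}^{-1} τ_N‖_∞ < 1 holds, then the Lasso
solution vanishes outside N; in particular |S_* ∖ S| ≤ |N| − s. -/
theorem stmt9 {p : ℕ} (M : Matrix (Fin p) (Fin p) ℝ) (hM : M.PosSemidef)
    (S N : Finset (Fin p)) (hSN : S ⊆ N)
    (lam : ℝ) (hlam : 0 < lam)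
    (β0 βstar τ : Fin p → ℝ) (hβ0 : ∀ j ∉ S, β0 j = 0)
    -- KKT conditions for the noiseless Lasso
    (hkkt : ∀ j, 2 * M.mulVec (βstar - β0) j = -(lam * τ j))
    (hτ1 : ∀ j, |τ j| ≤ 1)
    (hτsign : ∀ j, βstar j ≠ 0 → τ j = Real.sign (βstar j))
    -- Σ_{N,N} is invertible
    (hA : IsUnit (sub11 M N).det)
    -- strict uniform irrepresentable condition on N
    (hirr : ∀ τN : {x : Fin p // x ∈ N} → ℝ, (∀ i, |τN i| ≤ 1) →
      ∀ j : {x : Fin p // x ∉ N},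
        |(sub21 M N).mulVec ((sub11 M N)⁻¹.mulVec τN) j| < 1) :
    (∀ j ∉ N, βstar j = 0) ∧
      ({j | βstar j ≠ 0} \ (S : Set (Fin p))).ncard ≤ N.card - S.card := by
  classical
  set A := sub11 M N with hAdf
  set B := sub21 M N with hBdf
  set C : Matrix {x : Fin p // x ∈ N} {x : Fin p // x ∉ N} ℝ :=
    M.submatrix Subtype.val Subtype.val with hCdf
  set D : Matrix {x : Fin p // x ∉ N} {x : Fin p // x ∉ N} ℝ :=
    M.submatrix Subtype.val Subtype.val with hDdf
  set u : {x : Fin p // x ∉ N} → ℝ := fun j => βstar j.val with hudf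
  set τN : {x : Fin p // x ∈ N} → ℝ := fun i => τ i.val with hτNdf
  set w := B.mulVec (A⁻¹.mulVec τN) with hwdf
  set b : Fin p → ℝ := βstar - β0 with hbdf
  set bN : {x : Fin p // x ∈ N} → ℝ := fun i => b i.val with hbNdf
  set zN : {x : Fin p // x ∈ N} → ℝ := -(A⁻¹.mulVec (C.mulVec u)) with hzNdf
  set z : Fin p → ℝ := fun j => if h : j ∈ N then zN ⟨j, h⟩ else u ⟨j, h⟩ with hzdf
  -- basic facts
  have hb_out : ∀ j : {x : Fin p // x ∉ N}, b j.val = u j := by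
    intro j
    have : β0 j.val = 0 := hβ0 _ (fun hS => j.prop (hSN hS))
    simp [hbdf, hudf, Pi.sub_apply, this]
  have hw1 : ∀ j, |w j| < 1 := hirr τN (fun i => hτ1 i.val)
  -- sums for submatrix mulVec
  have hAmv : ∀ (x : {x : Fin p // x ∈ N} → ℝ) i,
      (A.mulVec x) i = ∑ k : {x : Fin p // x ∈ N}, M i.val k.val * x k := by
    intro x i; simp [hAdf, sub11, Matrix.mulVec, dotProduct]
  have hBmv : ∀ (x : {x : Fin p // x ∈ N} → ℝ) j,
      (B.mulVec x) j = ∑ k : {x : Fin p // x ∈ N}, M j.val k.val * x k := by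
    intro x j; simp [hBdf, sub21, Matrix.mulVec, dotProduct]
  have hCmv : ∀ (x : {x : Fin p // x ∉ N} → ℝ) i,
      (C.mulVec x) i = ∑ k : {x : Fin p // x ∉ N}, M i.val k.val * x k := by
    intro x i; simp [hCdf, Matrix.mulVec, dotProduct]
  have hDmv : ∀ (x : {x : Fin p // x ∉ N} → ℝ) j,
      (D.mulVec x) j = ∑ k : {x : Fin p // x ∉ N}, M j.val k.val * x k := by
    intro x j; simp [hDdf, Matrix.mulVec, dotProduct]
  -- KKT rows inside N
  have hrowN : ∀ i : {x : Fin p // x ∈ N},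
      (A.mulVec bN) i + (C.mulVec u) i = -(lam * τN i) / 2 := by
    intro i
    have h1 := hkkt i.val
    have h2 := rowSplit M N b i.val
    rw [hAmv, hCmv]
    have h3 : (∑ k : {x : Fin p // x ∉ N}, M i.val k.val * b k.val)
        = ∑ k : {x : Fin p // x ∉ N}, M i.val k.val * u k :=
      Finset.sum_congr rfl fun k _ => by rw [hb_out k]
    rw [← h3, ← h2]
    have : M.mulVec b i.val = -(lam * τN i) / 2 := by
      have : τN i = τ i.val := rfl
      rw [this]; linarith [h1]
    exact this
  -- KKT rows outside N
  have hrowG : ∀ j : {x : Fin p // x ∉ N},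
      (B.mulVec bN) j + (D.mulVec u) j = -(lam * τ j.val) / 2 := by
    intro j
    have h1 := hkkt j.val
    have h2 := rowSplit M N b j.val
    rw [hBmv, hDmv]
    have h3 : (∑ k : {x : Fin p // x ∉ N}, M j.val k.val * b k.val)
        = ∑ k : {x : Fin p // x ∉ N}, M j.val k.val * u k :=
      Finset.sum_congr rfl fun k _ => by rw [hb_out k]
    rw [← h3, ← h2]
    linarith [h1]
  -- inverse facts
  have hinv : ∀ x : {x : Fin p // x ∈ N} → ℝ, A⁻¹.mulVec (A.mulVec x) = x := by
    intro x; rw [Matrix.mulVec_mulVec, Matrix.nonsing_inv_mul A hA, Matrix.one_mulVec]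
  have hinv' : ∀ x : {x : Fin p // x ∈ N} → ℝ, A.mulVec (A⁻¹.mulVec x) = x := by
    intro x; rw [Matrix.mulVec_mulVec, Matrix.mul_nonsing_inv A hA, Matrix.one_mulVec]
  -- solve for bN
  have hAbN : A.mulVec bN = (-(lam/2)) • τN - C.mulVec u := by
    funext i
    rw [Pi.sub_apply, Pi.smul_apply, smul_eq_mul, eq_sub_iff_add_eq, hrowN i]
    ring
  have hbNeq : bN = (-(lam/2)) • (A⁻¹.mulVec τN) + zN := by
    have h := congrArg (A⁻¹.mulVec) hAbN
    rw [hinv] at h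
    rw [h, Matrix.mulVec_sub, Matrix.mulVec_smul, hzNdf, sub_eq_add_neg]
  have hBbN : ∀ j, (B.mulVec bN) j = (-(lam/2)) * w j + (B.mulVec zN) j := by
    intro j
    rw [hbNeq, Matrix.mulVec_add, Matrix.mulVec_smul, Pi.add_apply, Pi.smul_apply, smul_eq_mul,
      hwdf]
  -- sign identity
  have hsign : ∀ j : {x : Fin p // x ∉ N}, u j * τ j.val = |u j| := by
    intro j
    by_cases h : βstar j.val = 0
    · simp [hudf, h]
    · rw [hτsign _ h]
      show βstar j.val * Real.sign (βstar j.val) = |βstar j.val|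
      rcases lt_or_gt_of_ne h with hlt | hgt
      · rw [Real.sign_of_neg hlt, abs_of_neg hlt]; ring
      · rw [Real.sign_of_pos hgt, abs_of_pos hgt]; ring
  -- piecewise facts about z
  have hzα : ∀ i : {x : Fin p // x ∈ N}, z i.val = zN i := by
    intro i; simp [hzdf, i.prop]
  have hzγ : ∀ j : {x : Fin p // x ∉ N}, z j.val = u j := by
    intro j; simp [hzdf, j.prop]
  have hAzN : A.mulVec zN = -(C.mulVec u) := by
    rw [hzNdf, Matrix.mulVec_neg, hinv']
  -- positivity of the Schur-type quadratic form
  have hQ : 0 ≤ ∑ j : {x : Fin p // x ∉ N}, u j * ((B.mulVec zN) j + (D.mulVec u) j) := by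
    have h0 := hM.dotProduct_mulVec_nonneg z
    rw [star_trivial] at h0
    have hd : dotProduct z (M.mulVec z) = ∑ j, z j * (M.mulVec z) j := rfl
    rw [hd, splitSum N] at h0
    have hα : (∑ i : {x : Fin p // x ∈ N}, z i.val * (M.mulVec z) i.val) = 0 := by
      apply Finset.sum_eq_zero
      intro i _
      have hr : (M.mulVec z) i.val = (A.mulVec zN) i + (C.mulVec u) i := by
        rw [rowSplit M N z i.val, hAmv, hCmv]
        congr 1
        · exact Finset.sum_congr rfl fun k _ => by rw [hzα k]
        · exact Finset.sum_congr rfl fun k _ => by rw [hzγ k]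
      rw [hr, hAzN, Pi.neg_apply, neg_add_cancel, mul_zero]
    have hγ : (∑ j : {x : Fin p // x ∉ N}, z j.val * (M.mulVec z) j.val)
        = ∑ j : {x : Fin p // x ∉ N}, u j * ((B.mulVec zN) j + (D.mulVec u) j) := by
      apply Finset.sum_congr rfl
      intro j _
      have hr : (M.mulVec z) j.val = (B.mulVec zN) j + (D.mulVec u) j := by
        rw [rowSplit M N z j.val, hBmv, hDmv]
        congr 1
        · exact Finset.sum_congr rfl fun k _ => by rw [hzα k]
        · exact Finset.sum_congr rfl fun k _ => by rw [hzγ k]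
      rw [hr, hzγ j]
    rw [hα, zero_add, hγ] at h0
    exact h0
  -- the key inequality
  have hkey : 0 ≤ ∑ j : {x : Fin p // x ∉ N}, (u j * w j - |u j|) := by
    have hE : ∑ j : {x : Fin p // x ∉ N}, u j * ((B.mulVec bN) j + (D.mulVec u) j)
        = -(lam/2) * ∑ j : {x : Fin p // x ∉ N}, |u j| := by
      rw [Finset.mul_sum]
      apply Finset.sum_congr rfl
      intro j _
      rw [hrowG j]
      have := hsign j
      nlinarith [hsign j]
    have hE2 : ∑ j : {x : Fin p // x ∉ N}, u j * ((B.mulVec bN) j + (D.mulVec u) j)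
        = -(lam/2) * (∑ j : {x : Fin p // x ∉ N}, u j * w j)
          + ∑ j : {x : Fin p // x ∉ N}, u j * ((B.mulVec zN) j + (D.mulVec u) j) := by
      rw [Finset.mul_sum, ← Finset.sum_add_distrib]
      apply Finset.sum_congr rfl
      intro j _
      rw [hBbN j]
      ring
    have h3 : -(lam/2) * (∑ j : {x : Fin p // x ∉ N}, |u j|)
        - (-(lam/2) * ∑ j : {x : Fin p // x ∉ N}, u j * w j)
        = ∑ j : {x : Fin p // x ∉ N}, u j * ((B.mulVec zN) j + (D.mulVec u) j) := by
      rw [← hE, hE2]; ring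
    have h4 : (lam/2) * ∑ j : {x : Fin p // x ∉ N}, (u j * w j - |u j|)
        = ∑ j : {x : Fin p // x ∉ N}, u j * ((B.mulVec zN) j + (D.mulVec u) j) := by
      rw [← h3, Finset.sum_sub_distrib]; ring
    have h5 : 0 ≤ (lam/2) * ∑ j : {x : Fin p // x ∉ N}, (u j * w j - |u j|) := h4 ▸ hQ
    have hl2 : 0 < lam / 2 := by linarith
    exact nonneg_of_mul_nonneg_right h5 hl2
  -- each term is nonpositive
  have hterm : ∀ j : {x : Fin p // x ∉ N}, u j * w j - |u j| ≤ 0 := by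
    intro j
    have h1 : u j * w j ≤ |u j| := by
      calc u j * w j ≤ |u j * w j| := le_abs_self _
        _ = |u j| * |w j| := abs_mul _ _
        _ ≤ |u j| * 1 := by
            exact mul_le_mul_of_nonneg_left (le_of_lt (hw1 j)) (abs_nonneg _)
        _ = |u j| := mul_one _
    linarith
  -- hence u = 0
  have hu0 : ∀ j : {x : Fin p // x ∉ N}, u j = 0 := by
    intro j
    by_contra huj
    have hsum0 : ∑ j : {x : Fin p // x ∉ N}, (u j * w j - |u j|) = 0 :=
      le_antisymm (Finset.sum_nonpos fun j _ => hterm j) hkey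
    have hall : ∀ k ∈ Finset.univ, (u k * w k - |u k| : ℝ) = 0 := by
      intro k _
      have := (Finset.sum_eq_zero_iff_of_nonpos (fun k _ => hterm k)).mp hsum0
      exact this k (Finset.mem_univ k)
    have hj := hall j (Finset.mem_univ j)
    have h1 : u j * w j = |u j| := by linarith
    have h2 : |u j| ≤ |u j| * |w j| := by
      calc |u j| = u j * w j := h1.symm
        _ ≤ |u j * w j| := le_abs_self _
        _ = |u j| * |w j| := abs_mul _ _
    have h3 : |u j| * |w j| < |u j| * 1 :=
      mul_lt_mul_of_pos_left (hw1 j) (abs_pos.mpr huj)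
    rw [mul_one] at h3
    linarith
  have hout : ∀ j ∉ N, βstar j = 0 := fun j hj => hu0 ⟨j, hj⟩
  refine ⟨hout, ?_⟩
  have hsub : {j | βstar j ≠ 0} \ (S : Set (Fin p)) ⊆ ((N \ S : Finset (Fin p)) : Set (Fin p)) := by
    intro x hx
    rcases hx with ⟨hx1, hx2⟩
    simp only [Finset.coe_sdiff, Set.mem_diff, Finset.mem_coe]
    refine ⟨?_, hx2⟩
    by_contra hxN
    exact hx1 (hout x hxN)
  have := Set.ncard_le_ncard hsub (Finset.finite_toSet _)
  rwa [Set.ncard_coe_finset, Finset.card_sdiff_of_subset hSN] at this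
end

section
/- Suppose the noiseless Lasso solution β* has active set S_* ⊇ S with Σ_{S_*,S_*} invertible. Then ‖Σ_{S_*^c,S_*} Σ_{S_*,S_*}^{-1} τ*_{S_*}‖_∞ ≤ 1, where τ*_{S_*} = sign(β*_{S_*}). Moreover ‖β*_{S_*} − β⁰_{S_*}‖₂ ≤ λ√|S_*| / (2 λ_min(Σ_{S_*,S_*})); hence if min_{j∈S}|β⁰_j| exceeds this bound, then sign(β*_{S_*}) is determined consistently with β⁰ on S. -/
open Finset Matrix

/-- If the Lasso active set S_* contains S and Σ_{S_*,S_*} is invertible, then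
‖Σ_{S_*^c,S_*} Σ_{S_*,S_*}^{-1} τ*_{S_*}‖_∞ ≤ 1, and
‖β*_{S_*} − β⁰_{S_*}‖₂ ≤ λ√|S_*|/(2 λ_min(Σ_{S_*,S_*})); if moreover
min_{j∈S}|β⁰_j| exceeds this bound, the signs of β* agree with those of β⁰ on S. -/
theorem stmt10 {p : ℕ} (M : Matrix (Fin p) (Fin p) ℝ) (hM : M.PosSemidef)
    (S Sstar : Finset (Fin p)) (hSsub : S ⊆ Sstar)
    (lam Λsq : ℝ) (hlam : 0 < lam) (hΛ : 0 < Λsq)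
    (β0 βstar τ : Fin p → ℝ) (hβ0 : ∀ j ∉ S, β0 j = 0)
    -- S_* is the active set of β*
    (hSstar : ∀ j, j ∈ Sstar ↔ βstar j ≠ 0)
    -- KKT conditions for the noiseless Lasso
    (hkkt : ∀ j, 2 * M.mulVec (βstar - β0) j = -(lam * τ j))
    (hτ1 : ∀ j, |τ j| ≤ 1)
    (hτsign : ∀ j, βstar j ≠ 0 → τ j = Real.sign (βstar j))
    -- Σ_{S_*,S_*} is invertible, with smallest eigenvalue ≥ Λsq
    (hA : IsUnit (sub11 M Sstar).det)
    (heig : ∀ v : Fin p → ℝ, (∀ j ∉ Sstar, v j = 0) → Λsq * l2sq v ≤ quad M v) :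
    (∀ j : {x : Fin p // x ∉ Sstar},
        |(sub21 M Sstar).mulVec ((sub11 M Sstar)⁻¹.mulVec (vecIn Sstar τ)) j| ≤ 1) ∧
    Real.sqrt (l2sq (rV Sstar (βstar - β0))) ≤
        lam * Real.sqrt Sstar.card / (2 * Λsq) ∧
    ((∀ j ∈ S, lam * Real.sqrt Sstar.card / (2 * Λsq) < |β0 j|) →
        ∀ j ∈ S, Real.sign (βstar j) = Real.sign (β0 j)) := by
  
  set d : Fin p → ℝ := βstar - β0 with hd
  have hd0 : ∀ j ∉ Sstar, d j = 0 := by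
    intro j hj
    have h1 : βstar j = 0 := by
      by_contra h; exact hj ((hSstar j).2 h)
    have h2 : β0 j = 0 := hβ0 j (fun hjS => hj (hSsub hjS))
    simp [hd, h1, h2]
  -- mulVec via sum over Sstar
  have hmv : ∀ j, M.mulVec d j = ∑ i ∈ Sstar, M j i * d i := by
    intro j
    rw [Matrix.mulVec, dotProduct]
    exact (Finset.sum_subset (Finset.subset_univ Sstar)
      (fun i _ hi => by rw [hd0 i hi, mul_zero])).symm
  -- the reduced KKT
  have hmv2 : ∀ j, M.mulVec d j = -(lam / 2) * τ j := by
    intro j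
    have := hkkt j
    linarith [hkkt j]
  -- sub11 * (d restricted) = (M d) restricted
  have hsub11 : (sub11 M Sstar).mulVec (vecIn Sstar d) = (-(lam / 2)) • vecIn Sstar τ := by
    funext j
    have : (sub11 M Sstar).mulVec (vecIn Sstar d) j = ∑ i ∈ Sstar, M j.val i * d i := by
      rw [Matrix.mulVec, dotProduct]
      rw [← Finset.sum_coe_sort Sstar (fun i => M j.val i * d i)]
      rfl
    rw [this, ← hmv, hmv2]
    simp [vecIn]
  have hinv : (sub11 M Sstar)⁻¹.mulVec (vecIn Sstar τ) = (-2 / lam) • vecIn Sstar d := by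
    have hτeq : vecIn Sstar τ = (-2 / lam) • (sub11 M Sstar).mulVec (vecIn Sstar d) := by
      rw [hsub11, smul_smul]
      have : -2 / lam * -(lam / 2) = 1 := by field_simp
      rw [this, one_smul]
    rw [hτeq, Matrix.mulVec_smul, Matrix.mulVec_mulVec, Matrix.nonsing_inv_mul _ hA,
      Matrix.one_mulVec]
  -- Part 1
  have part1 : ∀ j : {x : Fin p // x ∉ Sstar},
      |(sub21 M Sstar).mulVec ((sub11 M Sstar)⁻¹.mulVec (vecIn Sstar τ)) j| ≤ 1 := by
    intro j
    rw [hinv, Matrix.mulVec_smul]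
    have h21 : (sub21 M Sstar).mulVec (vecIn Sstar d) j = M.mulVec d j.val := by
      rw [hmv j.val, Matrix.mulVec, dotProduct]
      rw [← Finset.sum_coe_sort Sstar (fun i => M j.val i * d i)]
      rfl
    rw [Pi.smul_apply, smul_eq_mul, h21, hmv2]
    have : -2 / lam * (-(lam / 2) * τ j.val) = τ j.val := by field_simp
    rw [this]
    exact hτ1 _
  -- Part 2
  have hrV : rV Sstar d = d := by
    funext j
    by_cases hj : j ∈ Sstar
    · simp [rV, hj]
    · simp [rV, hj, hd0 j hj]
  have hl2nn : 0 ≤ l2sq d := Finset.sum_nonneg fun i _ => sq_nonneg _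
  set T := Real.sqrt (l2sq d) with hT
  have hTnn : 0 ≤ T := Real.sqrt_nonneg _
  have hTsq : T ^ 2 = l2sq d := Real.sq_sqrt hl2nn
  have hquad : quad M d = ∑ j, d j * (-(lam / 2) * τ j) := by
    unfold quad dotProduct
    exact Finset.sum_congr rfl fun j _ => by rw [hmv2]
  have hCS : ∑ j ∈ Sstar, |d j| ≤ Real.sqrt Sstar.card * T := by
    have h := Real.sum_mul_le_sqrt_mul_sqrt Sstar (fun _ => (1:ℝ)) (fun j => |d j|)
    simp only [one_mul] at h
    have h1 : Real.sqrt (∑ _j ∈ Sstar, (1:ℝ) ^ 2) = Real.sqrt Sstar.card := by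
      simp
    have h2 : Real.sqrt (∑ j ∈ Sstar, |d j| ^ 2) ≤ T := by
      apply Real.sqrt_le_sqrt
      rw [hd]
      calc ∑ j ∈ Sstar, |d j| ^ 2 = ∑ j ∈ Sstar, d j ^ 2 := by
            exact Finset.sum_congr rfl fun j _ => sq_abs _
        _ ≤ l2sq d := Finset.sum_le_sum_of_subset_of_nonneg (Finset.subset_univ _)
            (fun i _ _ => sq_nonneg _)
    calc ∑ j ∈ Sstar, |d j| ≤ Real.sqrt (∑ _j ∈ Sstar, (1:ℝ)^2) * Real.sqrt (∑ j ∈ Sstar, |d j| ^ 2) := h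
      _ ≤ Real.sqrt Sstar.card * T := by
          rw [h1]
          exact mul_le_mul_of_nonneg_left h2 (Real.sqrt_nonneg _)
  have hbound : Λsq * T ^ 2 ≤ (lam / 2) * (Real.sqrt Sstar.card * T) := by
    rw [hTsq]
    calc Λsq * l2sq d ≤ quad M d := heig d hd0
      _ = ∑ j, d j * (-(lam / 2) * τ j) := hquad
      _ ≤ ∑ j, (lam / 2) * |d j| := by
          apply Finset.sum_le_sum
          intro j _
          calc d j * (-(lam / 2) * τ j) ≤ |d j * (-(lam / 2) * τ j)| := le_abs_self _
            _ = (lam / 2) * (|d j| * |τ j|) := by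
                rw [abs_mul, abs_mul, abs_neg, abs_of_pos (by linarith : (0:ℝ) < lam/2)]
                ring
            _ ≤ (lam / 2) * (|d j| * 1) := by
                apply mul_le_mul_of_nonneg_left _ (by linarith)
                exact mul_le_mul_of_nonneg_left (hτ1 j) (abs_nonneg _)
            _ = (lam / 2) * |d j| := by ring
      _ = (lam / 2) * ∑ j, |d j| := (Finset.mul_sum _ _ _).symm
      _ = (lam / 2) * ∑ j ∈ Sstar, |d j| := by
          congr 1
          exact (Finset.sum_subset (Finset.subset_univ Sstar)
            (fun i _ hi => by rw [hd0 i hi, abs_zero])).symm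
      _ ≤ (lam / 2) * (Real.sqrt Sstar.card * T) :=
          mul_le_mul_of_nonneg_left hCS (by linarith)
  have part2 : T ≤ lam * Real.sqrt Sstar.card / (2 * Λsq) := by
    rcases eq_or_lt_of_le hTnn with h0 | h0
    · rw [← h0]; positivity
    · rw [le_div_iff₀ (by positivity)]
      nlinarith [hbound]
  refine ⟨part1, by rwa [hrV], ?_⟩
  -- Part 3
  intro hmin j hjS
  have hβ0j : β0 j ≠ 0 := by
    intro h
    have := hmin j hjS
    rw [h, abs_zero] at this
    have : (0:ℝ) ≤ lam * Real.sqrt Sstar.card / (2 * Λsq) := by positivity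
    linarith [hmin j hjS, this]
  have hdj : |d j| < |β0 j| := by
    have h1 : |d j| ≤ T := by
      rw [← Real.sqrt_sq_eq_abs]
      apply Real.sqrt_le_sqrt
      calc d j ^ 2 ≤ ∑ i, d i ^ 2 :=
            Finset.single_le_sum (fun i _ => sq_nonneg (d i)) (Finset.mem_univ j)
        _ = l2sq d := rfl
    linarith [hmin j hjS, part2]
  have hdval : d j = βstar j - β0 j := rfl
  rcases lt_trichotomy (β0 j) 0 with hneg | hz | hpos
  · have : βstar j < 0 := by
      have := abs_lt.1 hdj
      rw [hdval] at this
      rw [abs_of_neg hneg] at this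
      linarith [this.2]
    rw [Real.sign_of_neg this, Real.sign_of_neg hneg]
  · exact absurd hz hβ0j
  · have : 0 < βstar j := by
      have := abs_lt.1 hdj
      rw [hdval] at this
      rw [abs_of_pos hpos] at this
      linarith [this.1]
    rw [Real.sign_of_pos this, Real.sign_of_pos hpos]
end

section
/- If the weak restricted isometry constant ϑ = θ(S,2s)/Λ²(S,2s) satisfies ϑ < 1/L, then the restricted eigenvalue satisfies φ(L,S,2s) ≥ (1 − Lϑ)·Λ(S,2s). -/
open Finset Matrix

lemma l2sq_rV_eq {p : ℕ} (B : Finset (Fin p)) (v : Fin p → ℝ) :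
    l2sq (rV B v) = ∑ j ∈ B, v j ^ 2 := by
  unfold l2sq rV
  have h : ∀ j : Fin p, (if j ∈ B then v j else 0) ^ 2 = if j ∈ B then v j ^ 2 else 0 := by
    intro j; split <;> simp
  simp_rw [h]
  rw [Finset.sum_ite_mem, Finset.univ_inter]

lemma l1_rV_eq {p : ℕ} (B : Finset (Fin p)) (v : Fin p → ℝ) :
    l1 (rV B v) = ∑ j ∈ B, |v j| := by
  unfold l1 rV
  have h : ∀ j : Fin p, |if j ∈ B then v j else 0| = if j ∈ B then |v j| else 0 := by
    intro j; split <;> simp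
  simp_rw [h]
  rw [Finset.sum_ite_mem, Finset.univ_inter]

lemma rV_union {p : ℕ} (A B : Finset (Fin p)) (h : Disjoint A B) (v : Fin p → ℝ) :
    rV (A ∪ B) v = rV A v + rV B v := by
  funext j
  simp only [rV, Finset.mem_union, Pi.add_apply]
  by_cases hA : j ∈ A
  · have : j ∉ B := fun hB => (Finset.disjoint_left.mp h hA) hB
    simp [hA, this]
  · by_cases hB : j ∈ B <;> simp [hA, hB]

lemma rV_split {p : ℕ} (N : Finset (Fin p)) (v : Fin p → ℝ) :
    rV N v + rV Nᶜ v = v := by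
  funext j; simp only [rV, Pi.add_apply, Finset.mem_compl]
  by_cases h : j ∈ N <;> simp [h]

lemma quad2_add_right {p : ℕ} (M : Matrix (Fin p) (Fin p) ℝ) (u v w : Fin p → ℝ) :
    quad2 M u (v + w) = quad2 M u v + quad2 M u w := by
  unfold quad2; rw [Matrix.mulVec_add, dotProduct_add]

lemma quad_nonneg {p : ℕ} {M : Matrix (Fin p) (Fin p) ℝ} (hM : M.PosSemidef)
    (v : Fin p → ℝ) : 0 ≤ quad M v := by
  have := hM.dotProduct_mulVec_nonneg v
  simpa [quad, dotProduct] using this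

lemma quad2_symm {p : ℕ} {M : Matrix (Fin p) (Fin p) ℝ} (hM : M.PosSemidef)
    (u v : Fin p → ℝ) : quad2 M u v = quad2 M v u := by
  unfold quad2
  rw [Matrix.dotProduct_mulVec, ← Matrix.mulVec_transpose]
  have : Mᵀ = M := by
    have h := hM.1
    simpa [Matrix.IsHermitian, Matrix.conjTranspose_eq_transpose_of_trivial] using h
  rw [this, dotProduct_comm]

lemma quad_cs {p : ℕ} {M : Matrix (Fin p) (Fin p) ℝ} (hM : M.PosSemidef)
    (u v : Fin p → ℝ) : (quad2 M u v) ^ 2 ≤ quad M u * quad M v := by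
  have key : ∀ t : ℝ, 0 ≤ quad M v * (t * t) + (2 * quad2 M u v) * t + quad M u := by
    intro t
    have h := quad_nonneg hM (u + t • v)
    have expand : quad M (u + t • v)
        = quad M v * (t * t) + (2 * quad2 M u v) * t + quad M u := by
      unfold quad quad2 at *
      rw [Matrix.mulVec_add, Matrix.mulVec_smul, dotProduct_add, add_dotProduct,
        add_dotProduct, dotProduct_smul, smul_dotProduct, smul_dotProduct]
      have hsym : v ⬝ᵥ M.mulVec u = u ⬝ᵥ M.mulVec v := (quad2_symm hM v u : _)
      simp only [smul_eq_mul, hsym, dotProduct_smul, smul_dotProduct]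
      ring
    linarith [expand ▸ h]
  have := discrim_le_zero key
  unfold discrim at this
  nlinarith [this]

lemma exists_top {p : ℕ} (f : Fin p → ℝ) :
    ∀ (k : ℕ) (T : Finset (Fin p)), k ≤ T.card →
    ∃ B ⊆ T, B.card = k ∧ ∀ j ∈ T \ B, ∀ i ∈ B, f j ≤ f i := by
  intro k
  induction k with
  | zero => intro T _; exact ⟨∅, Finset.empty_subset T, rfl, by simp⟩
  | succ k ih =>
    intro T hk
    obtain ⟨B, hBT, hBcard, hBtop⟩ := ih T (Nat.le_of_succ_le hk)
    have hne : (T \ B).Nonempty := by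
      rw [← Finset.card_pos, Finset.card_sdiff_of_subset hBT, hBcard]
      omega
    obtain ⟨i₀, hi₀, hmax⟩ := Finset.exists_max_image (T \ B) f hne
    refine ⟨insert i₀ B, ?_, ?_, ?_⟩
    · exact Finset.insert_subset (Finset.mem_sdiff.mp hi₀).1 hBT
    · rw [Finset.card_insert_of_notMem (Finset.mem_sdiff.mp hi₀).2, hBcard]
    · intro j hj i hi
      have hj' : j ∈ T \ B := by
        rw [Finset.mem_sdiff] at hj ⊢
        exact ⟨hj.1, fun h => hj.2 (Finset.mem_insert_of_mem h)⟩
      rcases Finset.mem_insert.mp hi with rfl | hiB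
      · exact hmax j hj'
      · exact hBtop j hj' i hiB

lemma chunk_bound {p s : ℕ} (hs : 1 ≤ s) (F : Finset (Fin p) → ℝ) (v : Fin p → ℝ)
    (K : ℝ) (hK : 0 ≤ K) (T₀ : Finset (Fin p))
    (hadd : ∀ B C : Finset (Fin p), B ⊆ T₀ → C ⊆ T₀ → Disjoint B C → F (B ∪ C) = F B + F C)
    (hsmall : ∀ B ⊆ T₀, B.card ≤ s → |F B| ≤ K * Real.sqrt (∑ j ∈ B, v j ^ 2)) :
    ∀ T : Finset (Fin p), T ⊆ T₀ → ∀ c : ℝ, 0 ≤ c → (∀ j ∈ T, |v j| ≤ c / s) →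
      |F T| ≤ K * (c + ∑ j ∈ T, |v j|) / Real.sqrt s := by
  intro T
  induction T using Finset.strongInduction with
  | _ T ih =>
    intro hT c hc hv
    have hs' : (0 : ℝ) < s := by exact_mod_cast hs
    have hsqrt : (0 : ℝ) < Real.sqrt s := Real.sqrt_pos.mpr hs'
    have hl : (0 : ℝ) ≤ ∑ j ∈ T, |v j| := Finset.sum_nonneg fun j _ => abs_nonneg _
    set ℓ : ℝ := ∑ j ∈ T, |v j| with hℓ
    by_cases hcard : T.card ≤ s
    · -- base case: single chunk
      have h1 := hsmall T hT hcard
      have h2 : ∑ j ∈ T, v j ^ 2 ≤ (c + ℓ) ^ 2 / s := by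
        have h3 : ∑ j ∈ T, v j ^ 2 ≤ (c / s) * ℓ := by
          rw [hℓ, Finset.mul_sum]
          refine Finset.sum_le_sum fun j hj => ?_
          have := hv j hj
          nlinarith [abs_nonneg (v j), sq_abs (v j)]
        have h5 : c / s * ℓ ≤ (c + ℓ) ^ 2 / s := by
          rw [div_mul_eq_mul_div]
          gcongr
          nlinarith
        nlinarith [h5, h3]
      have h4 : Real.sqrt (∑ j ∈ T, v j ^ 2) ≤ (c + ℓ) / Real.sqrt s := by
        rw [show (c + ℓ) / Real.sqrt s = Real.sqrt ((c + ℓ) ^ 2 / s) by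
          rw [Real.sqrt_div' ((c+ℓ)^2) (le_of_lt hs'), Real.sqrt_sq (by linarith)]]
        exact Real.sqrt_le_sqrt h2
      calc |F T| ≤ K * Real.sqrt (∑ j ∈ T, v j ^ 2) := h1
        _ ≤ K * ((c + ℓ) / Real.sqrt s) := by
            exact mul_le_mul_of_nonneg_left h4 hK
        _ = K * (c + ℓ) / Real.sqrt s := by ring
    · -- inductive step
      push_neg at hcard
      obtain ⟨B, hBT, hBcard, hBtop⟩ := exists_top (fun j => |v j|) s T (le_of_lt hcard)
      have hBne : B.Nonempty := by
        rw [← Finset.card_pos, hBcard]; omega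
      have hsplit : F T = F B + F (T \ B) := by
        rw [← hadd B (T \ B) (hBT.trans hT) ((Finset.sdiff_subset).trans hT)
          Finset.disjoint_sdiff, Finset.union_sdiff_of_subset hBT]
      have hFB : |F B| ≤ K * (c / Real.sqrt s) := by
        have h1 := hsmall B (hBT.trans hT) (le_of_eq hBcard)
        have h2 : ∑ j ∈ B, v j ^ 2 ≤ c ^ 2 / s := by
          calc ∑ j ∈ B, v j ^ 2 ≤ ∑ _j ∈ B, (c/s)^2 := by
                refine Finset.sum_le_sum fun j hj => ?_
                have := hv j (hBT hj)
                nlinarith [abs_nonneg (v j), sq_abs (v j)]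
            _ = s * (c/s)^2 := by rw [Finset.sum_const, hBcard]; simp [nsmul_eq_mul]
            _ = c^2 / s := by field_simp
        have h4 : Real.sqrt (∑ j ∈ B, v j ^ 2) ≤ c / Real.sqrt s := by
          rw [show c / Real.sqrt s = Real.sqrt (c ^ 2 / s) by
            rw [Real.sqrt_div' (c^2) (le_of_lt hs'), Real.sqrt_sq hc]]
          exact Real.sqrt_le_sqrt h2
        calc |F B| ≤ K * Real.sqrt (∑ j ∈ B, v j ^ 2) := h1
          _ ≤ K * (c / Real.sqrt s) := mul_le_mul_of_nonneg_left h4 hK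
      set c' : ℝ := ∑ i ∈ B, |v i| with hc'def
      have hc' : 0 ≤ c' := Finset.sum_nonneg fun i _ => abs_nonneg _
      have hv' : ∀ j ∈ T \ B, |v j| ≤ c' / s := by
        intro j hj
        have hsum : (s : ℝ) * |v j| ≤ c' := by
          have : ∑ _i ∈ B, |v j| ≤ ∑ i ∈ B, |v i| :=
            Finset.sum_le_sum fun i hi => hBtop j hj i hi
          rwa [Finset.sum_const, hBcard, nsmul_eq_mul] at this
        rw [le_div_iff₀ hs']; linarith
      have hTB : T \ B ⊂ T := Finset.sdiff_ssubset hBT hBne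
      have hIH := ih (T \ B) hTB ((Finset.sdiff_subset).trans hT) c' hc' hv'
      have hsum_split : c' + ∑ j ∈ T \ B, |v j| = ℓ := by
        rw [hc'def, hℓ, add_comm]
        exact Finset.sum_sdiff hBT
      calc |F T| = |F B + F (T \ B)| := by rw [hsplit]
        _ ≤ |F B| + |F (T \ B)| := abs_add_le _ _
        _ ≤ K * (c / Real.sqrt s) + K * (c' + ∑ j ∈ T \ B, |v j|) / Real.sqrt s := by
            linarith
        _ = K * (c + (c' + ∑ j ∈ T \ B, |v j|)) / Real.sqrt s := by ring
        _ = K * (c + ℓ) / Real.sqrt s := by rw [hsum_split]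

lemma stmt12_core {p : ℕ} (M : Matrix (Fin p) (Fin p) ℝ) (hM : M.PosSemidef)
    (S : Finset (Fin p)) (s : ℕ) (hs : S.card = s) (hs0 : 1 ≤ s)
    (L θ Λ : ℝ) (hL : 0 < L) (hθ : 0 ≤ θ) (hΛ : 0 < Λ)
    (hwRIP : L * (θ / Λ ^ 2) < 1)
    (horth : ∀ Ns : Finset (Fin p), S ⊆ Ns → Ns.card ≤ 2 * s →
      ∀ Ms : Finset (Fin p), Disjoint Ms Ns → Ms.card ≤ s →
      ∀ β γ : Fin p → ℝ,
        |quad2 M (rV Ns β) (rV Ms γ)| ≤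
          θ * Real.sqrt (l2sq (rV Ns β)) * Real.sqrt (l2sq (rV Ms γ)))
    (heig : ∀ Ns : Finset (Fin p), S ⊆ Ns → Ns.card ≤ 2 * s →
      ∀ v : Fin p → ℝ, (∀ j ∉ Ns, v j = 0) → Λ ^ 2 * l2sq v ≤ quad M v)
    (N' : Finset (Fin p)) (hSN' : S ⊆ N') (hN'card : N'.card ≤ 2 * s)
    (hNScard : (N' \ S).card = s)
    (β : Fin p → ℝ) (hcone : l1 (rV Sᶜ β) ≤ L * l1 (rV S β))
    (hdom : ∀ j ∉ N', ∀ i ∈ N' \ S, |β j| ≤ |β i|) :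
    ((1 - L * (θ / Λ ^ 2)) * Λ) ^ 2 * l2sq (rV N' β) ≤ quad M β := by
  have hΛ2 : (0 : ℝ) < Λ ^ 2 := by positivity
  have hLθ : L * θ < Λ ^ 2 := by
    have h := hwRIP
    rw [← mul_div_assoc] at h
    exact (div_lt_one hΛ2).mp h
  obtain ⟨x2, hx2def⟩ : ∃ r, l2sq (rV N' β) = r := ⟨_, rfl⟩
  rw [hx2def]
  have hx2 : 0 ≤ x2 := by
    rw [← hx2def, l2sq_rV_eq]; positivity
  rcases eq_or_lt_of_le hx2 with hx2eq | hx2pos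
  · rw [← hx2eq]
    simpa using quad_nonneg hM β
  obtain ⟨x, hxdef⟩ : ∃ r, Real.sqrt x2 = r := ⟨_, rfl⟩
  have hxsq : x ^ 2 = x2 := by rw [← hxdef]; exact Real.sq_sqrt hx2
  have hxpos : 0 < x := by rw [← hxdef]; exact Real.sqrt_pos.mpr hx2pos
  obtain ⟨q, hqdef⟩ : ∃ r, quad M (rV N' β) = r := ⟨_, rfl⟩
  have hq : Λ ^ 2 * x2 ≤ q := by
    rw [← hqdef, ← hx2def]
    apply heig N' hSN' hN'card
    intro j hj; simp [rV, hj]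
  have hq0 : 0 < q := lt_of_lt_of_le (by positivity) hq
  obtain ⟨cross, hcrossdef⟩ : ∃ r, quad2 M (rV N' β) (rV N'ᶜ β) = r := ⟨_, rfl⟩
  have hs' : (0 : ℝ) < s := by exact_mod_cast hs0
  have hsqrt : (0 : ℝ) < Real.sqrt s := Real.sqrt_pos.mpr hs'
  -- bound the cross term
  have hcross : |cross| ≤ L * θ * x2 := by
    have hchunk := chunk_bound hs0 (fun B => quad2 M (rV N' β) (rV B β)) β (θ * x)
      (by positivity) N'ᶜ
      (fun B C hB hC hBC => by
        simp only [rV_union B C hBC β, quad2_add_right])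
      (fun B hB hBcard => by
        have hdisj : Disjoint B N' := by
          rw [Finset.disjoint_left]
          intro a haB haN'
          exact (Finset.mem_compl.mp (hB haB)) haN'
        have := horth N' hSN' hN'card B hdisj hBcard β β
        rw [l2sq_rV_eq B β] at this
        calc |quad2 M (rV N' β) (rV B β)|
            ≤ θ * Real.sqrt (l2sq (rV N' β)) * Real.sqrt (∑ j ∈ B, β j ^ 2) := this
          _ = θ * x * Real.sqrt (∑ j ∈ B, β j ^ 2) := by rw [hx2def, hxdef])
      N'ᶜ (le_refl _) (∑ i ∈ N' \ S, |β i|)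
      (Finset.sum_nonneg fun i _ => abs_nonneg _)
      (by
        intro j hj
        have hjN' : j ∉ N' := Finset.mem_compl.mp hj
        have hsum : (s : ℝ) * |β j| ≤ ∑ i ∈ N' \ S, |β i| := by
          have h := Finset.sum_le_sum (fun i hi => hdom j hjN' i hi)
          rwa [Finset.sum_const, hNScard, nsmul_eq_mul] at h
        rw [le_div_iff₀ hs']; linarith)
    -- now rewrite the RHS
    have hunion : (N' \ S) ∪ N'ᶜ = Sᶜ := by
      ext j
      simp only [Finset.mem_union, Finset.mem_sdiff, Finset.mem_compl]
      constructor
      · rintro (⟨_, hjS⟩ | hjN')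
        · exact hjS
        · exact fun hjS => hjN' (hSN' hjS)
      · intro hjS
        by_cases hjN' : j ∈ N'
        · exact Or.inl ⟨hjN', hjS⟩
        · exact Or.inr hjN'
    have hdisj2 : Disjoint (N' \ S) N'ᶜ := by
      rw [Finset.disjoint_left]
      intro a ha haC
      exact (Finset.mem_compl.mp haC) (Finset.mem_sdiff.mp ha).1
    have hsum_eq : (∑ i ∈ N' \ S, |β i|) + ∑ j ∈ N'ᶜ, |β j| = ∑ j ∈ Sᶜ, |β j| := by
      rw [← Finset.sum_union hdisj2, hunion]
    have hl1 : ∑ j ∈ Sᶜ, |β j| ≤ L * ∑ j ∈ S, |β j| := by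
      have := hcone
      rwa [l1_rV_eq, l1_rV_eq] at this
    have hCS : (∑ j ∈ S, |β j|) ^ 2 ≤ s * ∑ j ∈ S, β j ^ 2 := by
      have := sq_sum_le_card_mul_sum_sq (s := S) (f := fun j => |β j|)
      simpa [hs, sq_abs] using this
    have hSsub : ∑ j ∈ S, β j ^ 2 ≤ x2 := by
      rw [← hx2def, l2sq_rV_eq]
      exact Finset.sum_le_sum_of_subset_of_nonneg hSN' (fun j _ _ => by positivity)
    have hl2 : ∑ j ∈ S, |β j| ≤ Real.sqrt s * x := by
      have h1 : 0 ≤ ∑ j ∈ S, |β j| := Finset.sum_nonneg fun j _ => abs_nonneg _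
      have h2 : (∑ j ∈ S, |β j|) ^ 2 ≤ (Real.sqrt s * x) ^ 2 := by
        have : (Real.sqrt s * x) ^ 2 = s * x2 := by
          rw [mul_pow, Real.sq_sqrt (le_of_lt hs'), hxsq]
        rw [this]
        calc (∑ j ∈ S, |β j|) ^ 2 ≤ s * ∑ j ∈ S, β j ^ 2 := hCS
          _ ≤ s * x2 := mul_le_mul_of_nonneg_left hSsub (le_of_lt hs')
      exact le_of_pow_le_pow_left₀ two_ne_zero
        (mul_nonneg (le_of_lt hsqrt) (le_of_lt hxpos)) h2
    calc |cross| ≤ θ * x * ((∑ i ∈ N' \ S, |β i|) + ∑ j ∈ N'ᶜ, |β j|) / Real.sqrt s := by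
          rw [← hcrossdef]; exact hchunk
      _ = θ * x * (∑ j ∈ Sᶜ, |β j|) / Real.sqrt s := by rw [hsum_eq]
      _ ≤ θ * x * (L * (Real.sqrt s * x)) / Real.sqrt s := by
          have hle : (∑ j ∈ Sᶜ, |β j|) ≤ L * (Real.sqrt s * x) :=
            hl1.trans (mul_le_mul_of_nonneg_left hl2 (le_of_lt hL))
          gcongr
      _ = L * θ * (x * x) := by field_simp
      _ = L * θ * x2 := by rw [← hxsq]; ring
  -- combine via Cauchy–Schwarz and monotonicity
  have hq2 : quad2 M (rV N' β) β = q + cross := by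
    have h := quad2_add_right M (rV N' β) (rV N' β) (rV N'ᶜ β)
    rw [rV_split] at h
    have hself : quad2 M (rV N' β) (rV N' β) = quad M (rV N' β) := rfl
    rw [hself, hqdef, hcrossdef] at h
    exact h
  have hCSq : (q + cross) ^ 2 ≤ q * quad M β := by
    have h := quad_cs hM (rV N' β) β
    rwa [hq2, hqdef] at h
  obtain ⟨a, hadef⟩ : ∃ r, L * θ * x2 = r := ⟨_, rfl⟩
  rw [hadef] at hcross
  have ha0 : 0 ≤ a := by rw [← hadef]; positivity
  have hwa : a ≤ Λ ^ 2 * x2 := by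
    rw [← hadef]; exact mul_le_mul_of_nonneg_right (le_of_lt hLθ) hx2
  have hD : q - a ≤ q + cross := by
    have := (abs_le.mp hcross).1
    linarith
  have hD0 : 0 ≤ q - a := by linarith
  have h1 : (q - a) ^ 2 ≤ (q + cross) ^ 2 := pow_le_pow_left₀ hD0 hD 2
  have h2 : (q - a) ^ 2 ≤ q * quad M β := h1.trans hCSq
  have hw0 : 0 < Λ ^ 2 * x2 := by positivity
  have h4 : 0 ≤ (q - Λ ^ 2 * x2) * (q * (Λ ^ 2 * x2) - a ^ 2) := by
    apply mul_nonneg (by linarith)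
    have h4a : a * a ≤ (Λ ^ 2 * x2) * (Λ ^ 2 * x2) := mul_le_mul hwa hwa ha0 (le_of_lt hw0)
    have h4b : (Λ ^ 2 * x2) * (Λ ^ 2 * x2) ≤ q * (Λ ^ 2 * x2) :=
      mul_le_mul_of_nonneg_right hq (le_of_lt hw0)
    have h4c : a ^ 2 = a * a := sq a
    linarith
  have hid : (Λ ^ 2 * x2) * (q - a) ^ 2 - q * ((Λ ^ 2 * x2 - a) ^ 2)
      = (q - Λ ^ 2 * x2) * (q * (Λ ^ 2 * x2) - a ^ 2) := by ring
  have h5 : q * ((Λ ^ 2 * x2 - a) ^ 2) ≤ (Λ ^ 2 * x2) * (q - a) ^ 2 := by linarith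
  have h6 : q * ((Λ ^ 2 * x2 - a) ^ 2) ≤ q * ((Λ ^ 2 * x2) * quad M β) := by
    have h6a : (Λ ^ 2 * x2) * (q - a) ^ 2 ≤ (Λ ^ 2 * x2) * (q * quad M β) :=
      mul_le_mul_of_nonneg_left h2 (le_of_lt hw0)
    calc q * ((Λ ^ 2 * x2 - a) ^ 2) ≤ (Λ ^ 2 * x2) * (q - a) ^ 2 := h5
      _ ≤ (Λ ^ 2 * x2) * (q * quad M β) := h6a
      _ = q * ((Λ ^ 2 * x2) * quad M β) := by ring
  have h7 : (Λ ^ 2 * x2 - a) ^ 2 ≤ (Λ ^ 2 * x2) * quad M β :=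
    le_of_mul_le_mul_left h6 hq0
  have hident : ((1 - L * (θ / Λ ^ 2)) * Λ) ^ 2 * x2 * (Λ ^ 2 * x2) = (Λ ^ 2 * x2 - a) ^ 2 := by
    rw [← hadef]
    field_simp
  have h9 : (Λ ^ 2 * x2) * (((1 - L * (θ / Λ ^ 2)) * Λ) ^ 2 * x2) ≤ (Λ ^ 2 * x2) * quad M β := by
    calc (Λ ^ 2 * x2) * (((1 - L * (θ / Λ ^ 2)) * Λ) ^ 2 * x2)
        = ((1 - L * (θ / Λ ^ 2)) * Λ) ^ 2 * x2 * (Λ ^ 2 * x2) := by ring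
      _ = (Λ ^ 2 * x2 - a) ^ 2 := hident
      _ ≤ (Λ ^ 2 * x2) * quad M β := h7
  exact le_of_mul_le_mul_left h9 hw0

/-- If ϑ = θ(S,2s)/Λ²(S,2s) < 1/L, then φ(L,S,2s) ≥ (1 − Lϑ)·Λ(S,2s). -/
theorem stmt12 {p : ℕ} (M : Matrix (Fin p) (Fin p) ℝ) (hM : M.PosSemidef)
    (S : Finset (Fin p)) (s : ℕ) (hs : S.card = s) (hs0 : 1 ≤ s)
    (L θ Λ : ℝ) (hL : 0 < L) (hθ : 0 ≤ θ) (hΛ : 0 < Λ)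
    -- weak (S,2s)-restricted isometry property: ϑ = θ/Λ² < 1/L
    (hwRIP : L * (θ / Λ ^ 2) < 1)
    -- θ is the (S,2s)-restricted orthogonality constant (as an upper bound)
    (horth : ∀ Ns : Finset (Fin p), S ⊆ Ns → Ns.card ≤ 2 * s →
      ∀ Ms : Finset (Fin p), Disjoint Ms Ns → Ms.card ≤ s →
      ∀ β γ : Fin p → ℝ,
        |quad2 M (rV Ns β) (rV Ms γ)| ≤
          θ * Real.sqrt (l2sq (rV Ns β)) * Real.sqrt (l2sq (rV Ms γ)))
    -- Λ² is the (S,2s)-uniform eigenvalue (as a lower bound)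
    (heig : ∀ Ns : Finset (Fin p), S ⊆ Ns → Ns.card ≤ 2 * s →
      ∀ v : Fin p → ℝ, (∀ j ∉ Ns, v j = 0) → Λ ^ 2 * l2sq v ≤ quad M v) :
    -- restricted eigenvalue bound: φ(L,S,2s) ≥ (1 − Lϑ)Λ
    ∀ Ns : Finset (Fin p), S ⊆ Ns → Ns.card ≤ 2 * s →
      ∀ β : Fin p → ℝ, l1 (rV Sᶜ β) ≤ L * l1 (rV S β) →
      (∀ j ∉ Ns, ∀ i ∈ Ns \ S, |β j| ≤ |β i|) →
      ((1 - L * (θ / Λ ^ 2)) * Λ) ^ 2 * l2sq (rV Ns β) ≤ quad M β := by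
  intro N hSN hNcard β hcone hdom
  have hcoef0 : 0 ≤ ((1 - L * (θ / Λ ^ 2)) * Λ) ^ 2 := by positivity
  have hmono : ∀ A B : Finset (Fin p), A ⊆ B → l2sq (rV A β) ≤ l2sq (rV B β) := by
    intro A B hAB
    rw [l2sq_rV_eq, l2sq_rV_eq]
    exact Finset.sum_le_sum_of_subset_of_nonneg hAB (fun j _ _ => by positivity)
  by_cases hp : p ≤ 2 * s
  · -- small-dimension case: apply heig to the whole space
    have hall : Λ ^ 2 * l2sq β ≤ quad M β := by
      apply heig Finset.univ (Finset.subset_univ S)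
      · simpa [Finset.card_univ] using hp
      · intro j hj; exact absurd (Finset.mem_univ j) hj
    have hm : l2sq (rV N β) ≤ l2sq β := by
      unfold l2sq rV
      apply Finset.sum_le_sum
      intro j _
      by_cases h : j ∈ N
      · simp [h]
      · rw [if_neg h]
        simpa using sq_nonneg (β j)
    have hcoef : ((1 - L * (θ / Λ ^ 2)) * Λ) ^ 2 ≤ Λ ^ 2 := by
      have h1 : 0 ≤ L * (θ / Λ ^ 2) := by positivity
      nlinarith [mul_nonneg h1 (by linarith : (0:ℝ) ≤ 2 - L * (θ / Λ ^ 2)), sq_nonneg Λ]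
    have hl2n : 0 ≤ l2sq (rV N β) := by
      rw [l2sq_rV_eq]; positivity
    calc ((1 - L * (θ / Λ ^ 2)) * Λ) ^ 2 * l2sq (rV N β)
        ≤ Λ ^ 2 * l2sq β := mul_le_mul hcoef hm hl2n (sq_nonneg Λ)
      _ ≤ quad M β := hall
  · -- general case: extend N to a set of cardinality 2s
    push_neg at hp
    have hk : 2 * s - N.card ≤ Nᶜ.card := by
      rw [Finset.card_compl, Fintype.card_fin]
      omega
    obtain ⟨B, hBN, hBcard, hBtop⟩ := exists_top (fun j => |β j|) (2 * s - N.card) Nᶜ hk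
    have hdisj : Disjoint N B := by
      rw [Finset.disjoint_right]
      intro a haB haN
      exact (Finset.mem_compl.mp (hBN haB)) haN
    have hN'card : (N ∪ B).card = 2 * s := by
      rw [Finset.card_union_of_disjoint hdisj, hBcard]
      omega
    have hSN' : S ⊆ N ∪ B := hSN.trans Finset.subset_union_left
    have hNScard : ((N ∪ B) \ S).card = s := by
      rw [Finset.card_sdiff_of_subset hSN', hN'card, hs]
      omega
    have hdom' : ∀ j ∉ N ∪ B, ∀ i ∈ (N ∪ B) \ S, |β j| ≤ |β i| := by
      intro j hj i hi
      have hjN : j ∉ N := fun h => hj (Finset.mem_union_left _ h)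
      have hjB : j ∉ B := fun h => hj (Finset.mem_union_right _ h)
      obtain ⟨hiU, hiS⟩ := Finset.mem_sdiff.mp hi
      rcases Finset.mem_union.mp hiU with hiN | hiB
      · exact hdom j hjN i (Finset.mem_sdiff.mpr ⟨hiN, hiS⟩)
      · exact hBtop j (Finset.mem_sdiff.mpr ⟨Finset.mem_compl.mpr hjN, hjB⟩) i hiB
    have hcore := stmt12_core M hM S s hs hs0 L θ Λ hL hθ hΛ hwRIP horth heig
      (N ∪ B) hSN' (le_of_eq hN'card) hNScard β hcone hdom'
    calc ((1 - L * (θ / Λ ^ 2)) * Λ) ^ 2 * l2sq (rV N β)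
        ≤ ((1 - L * (θ / Λ ^ 2)) * Λ) ^ 2 * l2sq (rV (N ∪ B) β) :=
          mul_le_mul_of_nonneg_left (hmono N (N ∪ B) Finset.subset_union_left) hcoef0
      _ ≤ quad M β := hcore
end

section
/- Suppose the uniform irrepresentable constant ϑ = max_{‖τ_S‖_∞≤1} ‖Σ_{S^c,S}Σ_{S,S}^{-1}τ_S‖_∞ < 1/L for some L ≥ 1, and Λ²(S,s) = λ_min(Σ_{S,S}) > 0. Then the compatibility constant satisfies φ²_compatible(L,S) ≥ (1 − Lϑ)² Λ²(S,s), where φ²_compatible(L,S) = min{ s·βᵀΣβ / ‖β_S‖₁² : ‖β_{S^c}‖₁ ≤ L‖β_S‖₁, β_S ≠ 0 }. In particular, the uniform (L,S,s)-irrepresentable condition implies the (L,S)-compatibility condition. -/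
open Finset Matrix

/-- Extension by zero as a linear map. -/
noncomputable def extLM {p : ℕ} (S : Finset (Fin p)) : ((↥S) → ℝ) →ₗ[ℝ] (Fin p → ℝ) where
  toFun w := fun j => if h : j ∈ S then w ⟨j, h⟩ else 0
  map_add' w w' := by funext j; by_cases h : j ∈ S <;> simp [h]
  map_smul' c w := by funext j; by_cases h : j ∈ S <;> simp [h]

/-- Existence of a vector supported on `S` whose image under `M` agrees with `τ` on `S`. -/
lemma exists_b {p : ℕ} (M : Matrix (Fin p) (Fin p) ℝ) (S : Finset (Fin p))
    (hinj : ∀ v : Fin p → ℝ, (∀ j ∉ S, v j = 0) → (∀ j ∈ S, M.mulVec v j = 0) → v = 0)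
    (τ : Fin p → ℝ) :
    ∃ b : Fin p → ℝ, (∀ j ∉ S, b j = 0) ∧ (∀ j ∈ S, M.mulVec b j = τ j) := by
  classical
  let A : ((↥S) → ℝ) →ₗ[ℝ] ((↥S) → ℝ) :=
    (LinearMap.funLeft ℝ ℝ (fun i : ↥S => (i : Fin p))).comp
      ((M.mulVecLin).comp (extLM S))
  have hAinj : Function.Injective A := by
    rw [injective_iff_map_eq_zero]
    intro w hw
    have hv : extLM S w = 0 := by
      apply hinj
      · intro j hj; simp [extLM, hj]
      · intro j hj
        have := congrFun hw ⟨j, hj⟩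
        simpa [A, LinearMap.funLeft] using this
    funext i
    have := congrFun hv (i : Fin p)
    simpa [extLM, i.2] using this
  have hAsurj : Function.Surjective A := (LinearMap.injective_iff_surjective).mp hAinj
  obtain ⟨w, hw⟩ := hAsurj (fun i => τ (i : Fin p))
  refine ⟨extLM S w, ?_, ?_⟩
  · intro j hj; simp [extLM, hj]
  · intro j hj
    have := congrFun hw ⟨j, hj⟩
    simpa [A, LinearMap.funLeft] using this

set_option maxHeartbeats 1000000 in
/-- The uniform (L,S,s)-irrepresentable condition implies the (L,S)-compatibility
condition: φ²_compatible(L,S) ≥ (1 − Lϑ)² Λ²(S,s). -/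
theorem stmt14 {p s : ℕ} (hs : 1 ≤ s)
    (M : Matrix (Fin p) (Fin p) ℝ) (hM : M.PosSemidef)
    (S : Finset (Fin p)) (hScard : S.card = s)
    (L ϑ Λsq : ℝ) (hL : 1 ≤ L) (hϑ0 : 0 ≤ ϑ) (hϑ : L * ϑ < 1) (hΛ : 0 < Λsq)
    -- Λsq = λ_min(Σ_{S,S}) (as a lower bound)
    (heig : ∀ v : Fin p → ℝ, (∀ j ∉ S, v j = 0) → Λsq * l2sq v ≤ quad M v)
    -- uniform irrepresentable constant bound: for all ‖τ_S‖_∞ ≤ 1 and b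
    -- supported on S with (Σ b)_S = τ_S (i.e. b_S = Σ_{S,S}^{-1}τ_S), the
    -- sup-norm of Σ_{S^c,S} Σ_{S,S}^{-1} τ_S = (Σ b)_{S^c} is at most ϑ
    (hirr : ∀ τ : Fin p → ℝ, (∀ j ∈ S, |τ j| ≤ 1) →
      ∀ b : Fin p → ℝ, (∀ j ∉ S, b j = 0) → (∀ j ∈ S, M.mulVec b j = τ j) →
      ∀ j ∉ S, |M.mulVec b j| ≤ ϑ) :
    -- compatibility: φ²_compatible(L,S) ≥ (1 − Lϑ)² Λsq
    ∀ β : Fin p → ℝ, l1 (rV Sᶜ β) ≤ L * l1 (rV S β) →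
      (1 - L * ϑ) ^ 2 * Λsq * (l1 (rV S β)) ^ 2 ≤ (s : ℝ) * quad M β := by
  classical
  intro β hβ
  -- basic facts about M
  have hMsym : ∀ i j, M i j = M j i := by
    intro i j
    have := congrFun (congrFun hM.1 i) j
    simpa [Matrix.conjTranspose_apply] using this.symm
  have hpsd : ∀ x : Fin p → ℝ, 0 ≤ x ⬝ᵥ M.mulVec x := by
    intro x
    have := hM.dotProduct_mulVec_nonneg x
    simpa [star, Pi.star_def] using this
  have hsym : ∀ x y : Fin p → ℝ, x ⬝ᵥ M.mulVec y = M.mulVec x ⬝ᵥ y := by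
    intro x y
    simp only [dotProduct, Matrix.mulVec, dotProduct, Finset.mul_sum, Finset.sum_mul]
    rw [Finset.sum_comm]
    apply Finset.sum_congr rfl; intro i _
    apply Finset.sum_congr rfl; intro j _
    rw [hMsym j i]; ring
  -- injectivity hypothesis for exists_b
  have hinj : ∀ v : Fin p → ℝ, (∀ j ∉ S, v j = 0) → (∀ j ∈ S, M.mulVec v j = 0) → v = 0 := by
    intro v hv0 hvS
    have hq : quad M v = 0 := by
      have : ∀ j ∈ (Finset.univ : Finset (Fin p)), v j * M.mulVec v j = 0 := by
        intro j _
        by_cases h : j ∈ S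
        · rw [hvS j h]; ring
        · rw [hv0 j h]; ring
      simpa [quad, dotProduct] using Finset.sum_eq_zero this
    have h1 := heig v hv0
    rw [hq] at h1
    have h2 : l2sq v ≤ 0 := by nlinarith [h1]
    have h3 : l2sq v = 0 :=
      le_antisymm h2 (Finset.sum_nonneg fun j _ => sq_nonneg _)
    funext j
    have h4 := (Finset.sum_eq_zero_iff_of_nonneg
      (fun j (_ : j ∈ Finset.univ) => sq_nonneg (v j))).mp h3 j (Finset.mem_univ j)
    exact pow_eq_zero_iff two_ne_zero |>.mp h4
  -- sign vector
  set τ : Fin p → ℝ := fun j => if β j < 0 then -1 else 1 with hτdef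
  have hτle : ∀ j ∈ S, |τ j| ≤ 1 := by
    intro j _
    by_cases h : β j < 0 <;> simp [hτdef, h]
  obtain ⟨b, hb0, hbS⟩ := exists_b M S hinj τ
  have hbound := hirr τ hτle b hb0 hbS
  -- notation
  set A : ℝ := l1 (rV S β) with hAdef
  set D : ℝ := M.mulVec b ⬝ᵥ β with hDdef
  set qb : ℝ := quad M b with hqbdef
  set qβ : ℝ := quad M β with hqβdef
  have hl1S : A = ∑ j ∈ S, |β j| := by
    simp [hAdef, l1, rV, apply_ite abs, Finset.sum_ite_mem]
  have hl1Sc : l1 (rV Sᶜ β) = ∑ j ∈ Sᶜ, |β j| := by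
    rw [l1, ← Finset.sum_subset (Finset.subset_univ Sᶜ)]
    · exact Finset.sum_congr rfl fun j hj => by simp [rV, hj]
    · intro j _ hj; simp [rV, hj]
  have hA0 : 0 ≤ A := by
    rw [hl1S]; exact Finset.sum_nonneg fun j _ => abs_nonneg _
  -- lower bound on D
  have hD1 : (1 - L * ϑ) * A ≤ D := by
    have hsplit : D = (∑ j ∈ S, M.mulVec b j * β j) + ∑ j ∈ Sᶜ, M.mulVec b j * β j := by
      rw [hDdef, dotProduct, ← Finset.sum_add_sum_compl S]
    have hS : (∑ j ∈ S, M.mulVec b j * β j) = ∑ j ∈ S, |β j| := by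
      apply Finset.sum_congr rfl
      intro j hj
      rw [hbS j hj, hτdef]
      by_cases h : β j < 0
      · simp [h, abs_of_neg h]
      · simp [h, abs_of_nonneg (not_lt.mp h)]
    have hSc : ∀ j ∈ Sᶜ, -(ϑ * |β j|) ≤ M.mulVec b j * β j := by
      intro j hj
      have hj' : j ∉ S := Finset.mem_compl.mp hj
      have h1 : |M.mulVec b j * β j| ≤ ϑ * |β j| := by
        rw [abs_mul]
        exact mul_le_mul_of_nonneg_right (hbound j hj') (abs_nonneg _)
      linarith [neg_abs_le (M.mulVec b j * β j)]
    have h2 : -(ϑ * ∑ j ∈ Sᶜ, |β j|) ≤ ∑ j ∈ Sᶜ, M.mulVec b j * β j := by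
      rw [Finset.mul_sum, ← Finset.sum_neg_distrib]
      exact Finset.sum_le_sum hSc
    have h3 : ∑ j ∈ Sᶜ, |β j| ≤ L * A := by rw [← hl1Sc]; exact hβ
    have h4 : -(ϑ * (L * A)) ≤ -(ϑ * ∑ j ∈ Sᶜ, |β j|) := by
      have := mul_le_mul_of_nonneg_left h3 hϑ0
      linarith
    rw [hsplit, hS, ← hl1S]
    nlinarith
  -- Cauchy-Schwarz: D^2 ≤ qβ * qb
  have hCS : D ^ 2 ≤ qβ * qb := by
    have key : ∀ t : ℝ, 0 ≤ qβ * (t * t) + (2 * D) * t + qb := by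
      intro t
      have h0 := hpsd (t • β + b)
      have hexp : (t • β + b) ⬝ᵥ M.mulVec (t • β + b)
          = qβ * (t * t) + (2 * D) * t + qb := by
        have hbβ : b ⬝ᵥ M.mulVec β = D := by rw [hsym b β, hDdef]
        have hβb : β ⬝ᵥ M.mulVec b = D := by
          rw [hsym β b, dotProduct_comm, hsym b β, hDdef]
        have hqβ' : β ⬝ᵥ M.mulVec β = qβ := by simp only [hqβdef, quad]
        have hqb' : b ⬝ᵥ M.mulVec b = qb := by simp only [hqbdef, quad]
        simp only [Matrix.mulVec_add, Matrix.mulVec_smul, dotProduct_add, add_dotProduct,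
          dotProduct_smul, smul_dotProduct, smul_eq_mul]
        rw [hβb, hbβ, hqβ', hqb']
        ring
      rw [hexp] at h0
      exact h0
    have hd := discrim_le_zero key
    rw [discrim] at hd
    nlinarith [hd]
  -- bound on qb
  have hqb0 : 0 ≤ qb := hpsd b
  have hqβ0 : 0 ≤ qβ := hpsd β
  have hqbs : Λsq * qb ≤ (s : ℝ) := by
    have hqbsum : qb = ∑ j ∈ S, b j * τ j := by
      rw [hqbdef, quad, dotProduct, ← Finset.sum_subset (Finset.subset_univ S)]
      · exact Finset.sum_congr rfl fun j hj => by rw [hbS j hj]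
      · intro j _ hj; rw [hb0 j hj]; ring
    have hT : qb ≤ ∑ j ∈ S, |b j| := by
      rw [hqbsum]
      apply Finset.sum_le_sum
      intro j hj
      calc b j * τ j ≤ |b j * τ j| := le_abs_self _
        _ = |b j| * |τ j| := abs_mul _ _
        _ ≤ |b j| * 1 := mul_le_mul_of_nonneg_left (hτle j hj) (abs_nonneg _)
        _ = |b j| := mul_one _
    have hT0 : 0 ≤ ∑ j ∈ S, |b j| := Finset.sum_nonneg fun j _ => abs_nonneg _
    have hCS2 : (∑ j ∈ S, |b j|) ^ 2 ≤ (s : ℝ) * ∑ j ∈ S, (b j) ^ 2 := by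
      have := Finset.sum_mul_sq_le_sq_mul_sq S (fun _ => (1 : ℝ)) (fun j => |b j|)
      simpa [hScard] using this
    have hN : l2sq b = ∑ j ∈ S, (b j) ^ 2 := by
      rw [l2sq, ← Finset.sum_subset (Finset.subset_univ S)]
      intro j _ hj; rw [hb0 j hj]; ring
    have heb : Λsq * ∑ j ∈ S, (b j) ^ 2 ≤ qb := by
      have h := heig b hb0
      rw [hN] at h
      rw [hqbdef]
      exact h
    have hN0 : 0 ≤ ∑ j ∈ S, (b j) ^ 2 := Finset.sum_nonneg fun j _ => sq_nonneg _
    have hq2 : qb ^ 2 ≤ (∑ j ∈ S, |b j|) ^ 2 := by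
      have := mul_self_le_mul_self hqb0 hT
      nlinarith [this]
    have hs0 : (0:ℝ) ≤ (s:ℝ) := Nat.cast_nonneg s
    have hchain : Λsq * qb ^ 2 ≤ (s:ℝ) * qb := by
      calc Λsq * qb ^ 2 ≤ Λsq * ((s:ℝ) * ∑ j ∈ S, (b j) ^ 2) :=
            mul_le_mul_of_nonneg_left (hq2.trans hCS2) hΛ.le
        _ = (s:ℝ) * (Λsq * ∑ j ∈ S, (b j) ^ 2) := by ring
        _ ≤ (s:ℝ) * qb := mul_le_mul_of_nonneg_left heb hs0
    rcases eq_or_lt_of_le hqb0 with h | h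
    · rw [← h]; simpa using hs0
    · nlinarith [hchain, h]
  -- finish
  have hLA0 : 0 ≤ (1 - L * ϑ) * A := mul_nonneg (by linarith) hA0
  have hD2 : ((1 - L * ϑ) * A) ^ 2 ≤ D ^ 2 :=
    pow_le_pow_left₀ hLA0 hD1 2
  calc (1 - L * ϑ) ^ 2 * Λsq * A ^ 2 = Λsq * ((1 - L * ϑ) * A) ^ 2 := by ring
    _ ≤ Λsq * D ^ 2 := mul_le_mul_of_nonneg_left hD2 hΛ.le
    _ ≤ Λsq * (qβ * qb) := mul_le_mul_of_nonneg_left hCS hΛ.le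
    _ = qβ * (Λsq * qb) := by ring
    _ ≤ qβ * (s:ℝ) := mul_le_mul_of_nonneg_left hqbs hqβ0
    _ = (s:ℝ) * qβ := by ring
end

section
/- Let Σ₀, Σ₁ be p×p symmetric matrices with max_{j,k}|(Σ₁)_{j,k} − (Σ₀)_{j,k}| ≤ λ̃. Then for every β with ‖β_{S^c}‖₁ ≤ L‖β_S‖₁ and βᵀΣ₀β > 0: |βᵀΣ₁β/βᵀΣ₀β − 1| ≤ (L+1)² λ̃ s / φ²₀, where φ₀ = φ_compatible(Σ₀, L, S) is the compatibility constant of Σ₀. -/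
open Finset Matrix

lemma quad_diff_bound {p : ℕ} (M0 M1 : Matrix (Fin p) (Fin p) ℝ) (lamt : ℝ)
    (hd : ∀ j k, |M1 j k - M0 j k| ≤ lamt) (v : Fin p → ℝ) :
    |quad M1 v - quad M0 v| ≤ lamt * (l1 v) ^ 2 := by
  have h1 : quad M1 v - quad M0 v = ∑ j, ∑ k, v j * (M1 j k - M0 j k) * v k := by
    unfold quad
    simp only [Matrix.mulVec, dotProduct, Finset.mul_sum, ← Finset.sum_sub_distrib]
    apply Finset.sum_congr rfl; intro j _
    apply Finset.sum_congr rfl; intro k _; ring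
  rw [h1]
  calc |∑ j, ∑ k, v j * (M1 j k - M0 j k) * v k|
      ≤ ∑ j, ∑ k, |v j| * lamt * |v k| := by
        refine (Finset.abs_sum_le_sum_abs _ _).trans (Finset.sum_le_sum fun j _ => ?_)
        refine (Finset.abs_sum_le_sum_abs _ _).trans (Finset.sum_le_sum fun k _ => ?_)
        rw [abs_mul, abs_mul]
        exact mul_le_mul_of_nonneg_right
          (mul_le_mul_of_nonneg_left (hd j k) (abs_nonneg _)) (abs_nonneg _)
    _ = lamt * (l1 v) ^ 2 := by
        unfold l1
        rw [sq, Finset.sum_mul_sum]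
        rw [Finset.mul_sum]
        apply Finset.sum_congr rfl; intro j _
        rw [Finset.mul_sum]
        apply Finset.sum_congr rfl; intro k _; ring

/-- Perturbation of the quadratic form under an entrywise approximation of the
Gram matrix: |βᵀΣ₁β/βᵀΣ₀β − 1| ≤ (L+1)²λ̃s/φ₀² on the compatibility cone. -/
theorem stmt15 {p s : ℕ}
    (M0 M1 : Matrix (Fin p) (Fin p) ℝ)
    (hM0 : M0.IsSymm) (hM1 : M1.IsSymm)
    (S : Finset (Fin p)) (hScard : S.card = s)
    (L lamt φ0 : ℝ) (hL : 0 < L) (hlamt : 0 ≤ lamt) (hφ0 : 0 < φ0)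
    -- d_∞(Σ₁, Σ₀) ≤ λ̃
    (hd : ∀ j k, |M1 j k - M0 j k| ≤ lamt)
    -- φ₀ is the (Σ₀,L,S)-compatibility constant
    (hcompat : ∀ β : Fin p → ℝ, l1 (rV Sᶜ β) ≤ L * l1 (rV S β) →
      φ0 ^ 2 * (l1 (rV S β)) ^ 2 ≤ (s : ℝ) * quad M0 β) :
    ∀ β : Fin p → ℝ, l1 (rV Sᶜ β) ≤ L * l1 (rV S β) → 0 < quad M0 β →
      |quad M1 β / quad M0 β - 1| ≤ (L + 1) ^ 2 * lamt * s / φ0 ^ 2 := by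
  intro β hcone hpos
  have hS0 : 0 ≤ l1 (rV S β) := Finset.sum_nonneg fun j _ => abs_nonneg _
  have hl1 : l1 β ≤ (L + 1) * l1 (rV S β) := by
    rw [l1_split S β]; nlinarith
  have h2 : (l1 β) ^ 2 ≤ (L + 1) ^ 2 * (l1 (rV S β)) ^ 2 := by
    have : 0 ≤ l1 β := Finset.sum_nonneg fun j _ => abs_nonneg _
    nlinarith
  have h3 := hcompat β hcone
  have key : |quad M1 β - quad M0 β| ≤ (L + 1) ^ 2 * lamt * s / φ0 ^ 2 * quad M0 β := by
    refine (quad_diff_bound M0 M1 lamt hd β).trans ?_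
    have h4 : (l1 β) ^ 2 ≤ (L + 1) ^ 2 * ((s : ℝ) * quad M0 β / φ0 ^ 2) := by
      have : (l1 (rV S β)) ^ 2 ≤ (s : ℝ) * quad M0 β / φ0 ^ 2 := by
        rw [le_div_iff₀ (by positivity), mul_comm]; exact h3
      nlinarith
    calc lamt * (l1 β) ^ 2 ≤ lamt * ((L + 1) ^ 2 * ((s : ℝ) * quad M0 β / φ0 ^ 2)) := by
          exact mul_le_mul_of_nonneg_left h4 hlamt
      _ = (L + 1) ^ 2 * lamt * s / φ0 ^ 2 * quad M0 β := by ring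
  rw [abs_le] at key ⊢
  constructor
  · rw [le_sub_iff_add_le, le_div_iff₀ hpos]
    nlinarith [key.1]
  · rw [sub_le_iff_le_add, div_le_iff₀ hpos]
    nlinarith [key.2]
end

section
/- Let Σ₀, Σ₁ be p×p positive semidefinite with supremum entry-wise distance d_∞(Σ₀,Σ₁). Then φ_compatible(Σ₁, L, S) ≥ φ_compatible(Σ₀, L, S) − (L+1)√(d_∞(Σ₀,Σ₁)·s). -/
open Finset Matrix

lemma my_sqrt_add_le (x y : ℝ) (hx : 0 ≤ x) (hy : 0 ≤ y) :
    Real.sqrt (x + y) ≤ Real.sqrt x + Real.sqrt y := by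
  have h1 : x + y ≤ (Real.sqrt x + Real.sqrt y)^2 := by
    nlinarith [Real.sq_sqrt hx, Real.sq_sqrt hy, Real.sqrt_nonneg x, Real.sqrt_nonneg y]
  have h2 := Real.sqrt_le_sqrt h1
  rwa [Real.sqrt_sq (by positivity : (0:ℝ) ≤ Real.sqrt x + Real.sqrt y)] at h2

lemma quad_diff {p : ℕ} (M0 M1 : Matrix (Fin p) (Fin p) ℝ) (d : ℝ)
    (hd : ∀ j k, |M0 j k - M1 j k| ≤ d) (β : Fin p → ℝ) :
    quad M0 β ≤ quad M1 β + d * (l1 β)^2 := by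
  have h1 : quad M0 β - quad M1 β = ∑ j, ∑ k, (β j * β k) * (M0 j k - M1 j k) := by
    simp only [quad, dotProduct, Matrix.mulVec, Finset.mul_sum,
      ← Finset.sum_sub_distrib]
    refine Finset.sum_congr rfl fun j _ => Finset.sum_congr rfl fun k _ => ?_
    ring
  have h2 : |quad M0 β - quad M1 β| ≤ d * (l1 β)^2 := by
    rw [h1]
    calc |∑ j, ∑ k, (β j * β k) * (M0 j k - M1 j k)|
        ≤ ∑ j, |∑ k, (β j * β k) * (M0 j k - M1 j k)| := Finset.abs_sum_le_sum_abs _ _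
      _ ≤ ∑ j, ∑ k, |(β j * β k) * (M0 j k - M1 j k)| :=
          Finset.sum_le_sum fun j _ => Finset.abs_sum_le_sum_abs _ _
      _ ≤ ∑ j, ∑ k, (|β j| * |β k|) * d := by
          refine Finset.sum_le_sum fun j _ => Finset.sum_le_sum fun k _ => ?_
          rw [abs_mul, abs_mul]
          exact mul_le_mul_of_nonneg_left (hd j k) (by positivity)
      _ = d * (l1 β)^2 := by
          simp only [l1, sq, Finset.sum_mul, Finset.mul_sum]
          rw [Finset.sum_comm]
          refine Finset.sum_congr rfl fun j _ => Finset.sum_congr rfl fun k _ => ?_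
          ring
  linarith [abs_le.mp h2]

/-- Compatibility constants under entrywise matrix approximation:
φ_compatible(Σ₁,L,S) ≥ φ_compatible(Σ₀,L,S) − (L+1)√(d_∞(Σ₀,Σ₁)·s). -/
theorem stmt16 {p s : ℕ}
    (M0 M1 : Matrix (Fin p) (Fin p) ℝ)
    (hM0 : M0.PosSemidef) (hM1 : M1.PosSemidef)
    (S : Finset (Fin p)) (hScard : S.card = s)
    (L d φ0 : ℝ) (hL : 0 < L) (hd0 : 0 ≤ d) (hφ0 : 0 ≤ φ0)
    -- d_∞(Σ₀, Σ₁) ≤ d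
    (hd : ∀ j k, |M0 j k - M1 j k| ≤ d)
    -- φ₀ is a (Σ₀,L,S)-compatibility constant:
    -- φ₀·‖β_S‖₁ ≤ √s·‖f_β‖_{Σ₀} on the cone
    (hcompat : ∀ β : Fin p → ℝ, l1 (rV Sᶜ β) ≤ L * l1 (rV S β) →
      φ0 * l1 (rV S β) ≤ Real.sqrt s * Real.sqrt (quad M0 β)) :
    -- then φ₀ − (L+1)√(d·s) is a (Σ₁,L,S)-compatibility constant
    ∀ β : Fin p → ℝ, l1 (rV Sᶜ β) ≤ L * l1 (rV S β) →
      (φ0 - (L + 1) * Real.sqrt (d * s)) * l1 (rV S β) ≤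
        Real.sqrt s * Real.sqrt (quad M1 β) := by
  intro β hcone
  set a := l1 (rV S β) with ha
  have ha0 : 0 ≤ a := l1_nonneg _
  have hl1β : l1 β ≤ (L + 1) * a := by
    rw [l1_split S β]; nlinarith
  have hq1 : 0 ≤ quad M1 β := by simpa [quad] using hM1.dotProduct_mulVec_nonneg β
  have hq0 : 0 ≤ quad M0 β := by simpa [quad] using hM0.dotProduct_mulVec_nonneg β
  have hqd : quad M0 β ≤ quad M1 β + d * ((L + 1) * a)^2 := by
    have := quad_diff M0 M1 d hd β
    have h2 : d * (l1 β)^2 ≤ d * ((L + 1) * a)^2 := by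
      apply mul_le_mul_of_nonneg_left _ hd0
      exact pow_le_pow_left₀ (l1_nonneg β) hl1β 2
    linarith
  have hsq : Real.sqrt (quad M0 β) ≤ Real.sqrt (quad M1 β) + (L + 1) * a * Real.sqrt d := by
    calc Real.sqrt (quad M0 β) ≤ Real.sqrt (quad M1 β + d * ((L + 1) * a)^2) :=
          Real.sqrt_le_sqrt hqd
      _ ≤ Real.sqrt (quad M1 β) + Real.sqrt (d * ((L + 1) * a)^2) :=
          my_sqrt_add_le _ _ hq1 (by positivity)
      _ = Real.sqrt (quad M1 β) + (L + 1) * a * Real.sqrt d := by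
          rw [Real.sqrt_mul hd0, Real.sqrt_sq (by positivity)]; ring
  have hc := hcompat β hcone
  have hs0 : (0:ℝ) ≤ Real.sqrt s := Real.sqrt_nonneg _
  have hmain : φ0 * a ≤ Real.sqrt s * Real.sqrt (quad M1 β)
      + Real.sqrt s * ((L + 1) * a * Real.sqrt d) := by
    calc φ0 * a ≤ Real.sqrt s * Real.sqrt (quad M0 β) := hc
      _ ≤ Real.sqrt s * (Real.sqrt (quad M1 β) + (L + 1) * a * Real.sqrt d) :=
          mul_le_mul_of_nonneg_left hsq hs0
      _ = _ := by ring
  have hds : Real.sqrt (d * s) = Real.sqrt d * Real.sqrt s := Real.sqrt_mul hd0 _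
  have heq : (φ0 - (L + 1) * Real.sqrt (d * s)) * a
      = φ0 * a - Real.sqrt s * ((L + 1) * a * Real.sqrt d) := by
    rw [hds]; ring
  linarith
end

section
/- Let s > 2, 0 ≤ ρ < 1 − 1/(s−2), S = {1,…,s}, and Σ = diag(Σ₁₁, I_{p−s}) with Σ₁₁ = diag(B, I_{s−2}) and B = [[1,ρ],[ρ,1]]. Then the compatibility constant satisfies φ²_compatible(S) ≥ ((s−2)(1−ρ) − 1)/((s−2)(1−ρ) + 1), while the restricted eigenvalue satisfies φ²(S,s) = λ_min(Σ_{S,S}) = 1−ρ. In particular for 1−ρ = 3/(s−2): φ²_compatible(S) ≥ 1/2 while φ²(S,s) = 3/(s−2). -/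
open Finset Matrix

private lemma aux_quad_eq {p : ℕ} (ρ : ℝ) (i0 i1 : Fin p)
    (h0 : (i0 : ℕ) = 0) (h1 : (i1 : ℕ) = 1) (v : Fin p → ℝ) :
    quad (Matrix.of fun j k : Fin p =>
      if j = k then (1 : ℝ)
      else if ((j : ℕ) = 0 ∧ (k : ℕ) = 1) ∨ ((j : ℕ) = 1 ∧ (k : ℕ) = 0) then ρ
      else 0) v = l2sq v + 2 * ρ * (v i0 * v i1) := by
  have hpt : ∀ j k : Fin p, v j * ((Matrix.of fun j k : Fin p =>
      if j = k then (1 : ℝ)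
      else if ((j : ℕ) = 0 ∧ (k : ℕ) = 1) ∨ ((j : ℕ) = 1 ∧ (k : ℕ) = 0) then ρ
      else 0) j k * v k) =
      (if k = j then v j * v k else 0)
      + (if k = i1 then (if j = i0 then ρ * (v j * v k) else 0) else 0)
      + (if k = i0 then (if j = i1 then ρ * (v j * v k) else 0) else 0) := by
    intro j k
    simp only [Matrix.of_apply, Fin.ext_iff, h0, h1]
    split_ifs <;> first | ring1 | (exfalso; omega)
  simp only [quad, l2sq, Matrix.mulVec, dotProduct]
  rw [Finset.sum_congr rfl fun j _ => (Finset.mul_sum _ _ _).trans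
    (Finset.sum_congr rfl fun k _ => hpt j k)]
  simp only [Finset.sum_add_distrib, Finset.sum_ite_eq', Finset.mem_univ, if_true]
  rw [Finset.sum_congr rfl (fun j (_ : j ∈ univ) => by ring_nf :
    ∀ j ∈ univ, v j * v j = v j ^ 2)]
  ring

private lemma aux_ineq (m x u t Q G : ℝ) (hm : 1 ≤ m) (hx : 1 < x) (hu : 0 ≤ u)
    (ht : 0 ≤ t) (hQ : t ^ 2 ≤ m * Q) (hG : x * u ^ 2 + 2 * m * Q ≤ 2 * m * G) :
    (x - 1) / (x + 1) * (u + t) ^ 2 ≤ (m + 2) * G := by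
  have hx1 : (0 : ℝ) < x + 1 := by linarith
  rw [div_mul_eq_mul_div, div_le_iff₀ hx1]
  have h2m : (0 : ℝ) < 2 * m * (x + 2) :=
    mul_pos (by linarith) (by linarith)
  have hpos : (0 : ℝ) ≤ (x + 2) * (m + 2) * (x + 1) :=
    mul_nonneg (mul_nonneg (by linarith) (by linarith)) (by linarith)
  have h1 : (0 : ℝ) ≤ (m + 2) * (x + 1) * (x * u - 2 * t) ^ 2 :=
    mul_nonneg (mul_nonneg (by linarith) (by linarith)) (sq_nonneg _)
  have h2 : (0 : ℝ) ≤ 4 * ((m + (x ^ 2 + x)) * (u + t) ^ 2) := by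
    have : (0:ℝ) ≤ m + (x ^ 2 + x) := by nlinarith
    nlinarith [sq_nonneg (u + t)]
  have hid : (x + 2) * (m + 2) * (x + 1) * (x * u ^ 2 + 2 * t ^ 2)
      = 2 * m * ((x - 1) * (x + 2) * (u + t) ^ 2)
        + (m + 2) * (x + 1) * (x * u - 2 * t) ^ 2
        + 4 * ((m + (x ^ 2 + x)) * (u + t) ^ 2) := by ring
  have hstep1 : 2 * m * (x + 2) * ((x - 1) * (u + t) ^ 2)
      ≤ (x + 2) * (m + 2) * (x + 1) * (x * u ^ 2 + 2 * t ^ 2) := by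
    nlinarith [h1, h2, hid]
  have hstep2 : (x + 2) * (m + 2) * (x + 1) * (x * u ^ 2 + 2 * t ^ 2)
      ≤ (x + 2) * (m + 2) * (x + 1) * (x * u ^ 2 + 2 * m * Q) :=
    mul_le_mul_of_nonneg_left (by linarith) hpos
  have hstep3 : (x + 2) * (m + 2) * (x + 1) * (x * u ^ 2 + 2 * m * Q)
      ≤ (x + 2) * (m + 2) * (x + 1) * (2 * m * G) :=
    mul_le_mul_of_nonneg_left hG hpos
  have hfin : 2 * m * (x + 2) * ((x - 1) * (u + t) ^ 2)
      ≤ 2 * m * (x + 2) * ((m + 2) * G * (x + 1)) := by nlinarith [hstep1, hstep2, hstep3]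
  exact le_of_mul_le_mul_left hfin h2m

/-- Example where the compatibility constant is well-behaved while the restricted
eigenvalue φ²(S,s) = λ_min(Σ_{S,S}) = 1−ρ can be tiny: Σ = diag(diag(B, I_{s−2}), I_{p−s})
with B = [[1,ρ],[ρ,1]], S = {1,…,s}. -/
theorem stmt18 {p s : ℕ} (hs : 2 < s) (hsp : s ≤ p)
    (ρ : ℝ) (hρ0 : 0 ≤ ρ) (hρ1 : ρ < 1 - 1 / ((s : ℝ) - 2))
    (S : Finset (Fin p)) (hS : S = Finset.univ.filter fun j : Fin p => (j : ℕ) < s)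
    (M : Matrix (Fin p) (Fin p) ℝ)
    (hMdef : M = Matrix.of fun j k : Fin p =>
      if j = k then (1 : ℝ)
      else if ((j : ℕ) = 0 ∧ (k : ℕ) = 1) ∨ ((j : ℕ) = 1 ∧ (k : ℕ) = 0) then ρ
      else 0) :
    -- compatibility constant lower bound
    (∀ β : Fin p → ℝ, l1 (rV Sᶜ β) ≤ l1 (rV S β) →
      (((s : ℝ) - 2) * (1 - ρ) - 1) / (((s : ℝ) - 2) * (1 - ρ) + 1) *
        (l1 (rV S β)) ^ 2 ≤ (s : ℝ) * quad M β) ∧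
    -- restricted eigenvalue φ²(S,s) = λ_min(Σ_{S,S}) = 1 − ρ
    ((∀ v : Fin p → ℝ, (∀ j ∉ S, v j = 0) → (1 - ρ) * l2sq v ≤ quad M v) ∧
      (∃ v : Fin p → ℝ, v ≠ 0 ∧ (∀ j ∉ S, v j = 0) ∧ quad M v = (1 - ρ) * l2sq v)) ∧
    -- in particular, with 1 − ρ = 3/(s−2), the compatibility bound equals 1/2
    (1 - ρ = 3 / ((s : ℝ) - 2) →
      (((s : ℝ) - 2) * (1 - ρ) - 1) / (((s : ℝ) - 2) * (1 - ρ) + 1) = 1 / 2) := by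
  have hp2 : 2 ≤ p := by omega
  set i0 : Fin p := ⟨0, by omega⟩ with hi0def
  set i1 : Fin p := ⟨1, by omega⟩ with hi1def
  have hv0 : (i0 : ℕ) = 0 := rfl
  have hv1 : (i1 : ℕ) = 1 := rfl
  have hne01 : i0 ≠ i1 := by
    intro h; have := congrArg Fin.val h; rw [hv0, hv1] at this; omega
  have hm0 : (0 : ℝ) < (s : ℝ) - 2 := by
    have : (2 : ℝ) < (s : ℝ) := by exact_mod_cast hs
    linarith
  have hm1 : (1 : ℝ) ≤ (s : ℝ) - 2 := by
    have : (3 : ℝ) ≤ (s : ℝ) := by exact_mod_cast hs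
    linarith
  have hρlt1 : ρ < 1 := by
    have : 0 < 1 / ((s : ℝ) - 2) := by positivity
    linarith
  have hx : 1 < ((s : ℝ) - 2) * (1 - ρ) := by
    have h1 : 1 / ((s : ℝ) - 2) < 1 - ρ := by linarith
    have := (div_lt_iff₀ hm0).mp h1
    linarith
  have hquad : ∀ v : Fin p → ℝ, quad M v = l2sq v + 2 * ρ * (v i0 * v i1) := by
    intro v; rw [hMdef]; exact aux_quad_eq ρ i0 i1 hv0 hv1 v
  -- membership facts
  have hi0S : i0 ∈ S := by
    rw [hS]
    simp only [Finset.mem_filter, Finset.mem_univ, true_and, hv0]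
    omega
  have hi1S : i1 ∈ S := by
    rw [hS]
    simp only [Finset.mem_filter, Finset.mem_univ, true_and, hv1]
    omega
  have hi1S' : i1 ∈ S.erase i0 := Finset.mem_erase.mpr ⟨fun h => hne01 h.symm, hi1S⟩
  have hcardS : S.card = s := by
    rw [hS]
    have hmap : (Finset.univ.filter fun j : Fin p => (j : ℕ) < s)
        = Finset.map ⟨Fin.castLE hsp, Fin.castLE_injective hsp⟩ Finset.univ := by
      ext j
      simp only [Finset.mem_filter, Finset.mem_univ, true_and, Finset.mem_map,
        Function.Embedding.coeFn_mk]
      constructor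
      · intro h
        first
          | exact ⟨⟨(j : ℕ), h⟩, rfl⟩
          | exact ⟨⟨(j : ℕ), h⟩, Finset.mem_univ _, rfl⟩
      · first
          | (rintro ⟨a, rfl⟩; exact a.isLt)
          | (rintro ⟨a, -, rfl⟩; exact a.isLt)
    rw [hmap, Finset.card_map, Finset.card_univ, Fintype.card_fin]
  set S2 : Finset (Fin p) := (S.erase i0).erase i1 with hS2def
  have hcardS2 : (S2.card : ℝ) = (s : ℝ) - 2 := by
    have : S2.card = s - 2 := by
      rw [hS2def, Finset.card_erase_of_mem hi1S', Finset.card_erase_of_mem hi0S, hcardS]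
      omega
    rw [this, Nat.cast_sub (by omega)]; norm_num
  -- splitting sums over S
  have hsplit : ∀ f : Fin p → ℝ, ∑ j ∈ S, f j = f i0 + f i1 + ∑ j ∈ S2, f j := by
    intro f
    rw [← Finset.sum_erase_add S f hi0S, ← Finset.sum_erase_add (S.erase i0) f hi1S']
    ring
  have hl1S : ∀ β : Fin p → ℝ, l1 (rV S β) = |β i0| + |β i1| + ∑ j ∈ S2, |β j| := by
    intro β
    have : l1 (rV S β) = ∑ j ∈ S, |β j| := by
      simp only [l1, rV, apply_ite abs, abs_zero]
      rw [Finset.sum_ite_mem, Finset.univ_inter]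
    rw [this, hsplit]
  have hl2S : ∀ β : Fin p → ℝ, β i0 ^ 2 + β i1 ^ 2 + ∑ j ∈ S2, β j ^ 2 ≤ l2sq β := by
    intro β
    rw [← hsplit (fun j => β j ^ 2)]
    exact Finset.sum_le_sum_of_subset_of_nonneg (Finset.subset_univ S)
      (fun j _ _ => sq_nonneg _)
  refine ⟨?_, ⟨?_, ?_⟩, ?_⟩
  · -- compatibility lower bound
    intro β _
    set a := β i0
    set b := β i1
    set t := ∑ j ∈ S2, |β j| with htdef
    set Q := ∑ j ∈ S2, β j ^ 2 with hQdef
    have ht0 : 0 ≤ t := Finset.sum_nonneg fun j _ => abs_nonneg _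
    have hu0 : 0 ≤ |a| + |b| := by positivity
    have hCS : t ^ 2 ≤ ((s : ℝ) - 2) * Q := by
      have h := sq_sum_le_card_mul_sum_sq (s := S2) (f := fun j => |β j|)
      have habs : ∑ j ∈ S2, |β j| ^ 2 = Q := by
        rw [hQdef]; exact Finset.sum_congr rfl fun j _ => sq_abs _
      rw [habs, hcardS2] at h
      exact h
    have hab : (1 - ρ) / 2 * (|a| + |b|) ^ 2 ≤ a ^ 2 + b ^ 2 + 2 * ρ * (a * b) := by
      have h1 : -(|a| * |b|) ≤ a * b := by
        rw [← abs_mul]; exact neg_abs_le _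
      nlinarith [sq_nonneg (|a| - |b|), mul_nonneg hρ0 (sq_nonneg (|a| - |b|)),
        sq_abs a, sq_abs b, mul_nonneg hρ0 (show (0:ℝ) ≤ a * b + |a| * |b| by linarith)]
    have hlb : (1 - ρ) / 2 * (|a| + |b|) ^ 2 + Q ≤ quad M β := by
      have h2 := hl2S β
      rw [hquad β]
      simp only [l2sq] at h2 ⊢
      have : a ^ 2 + b ^ 2 + Q ≤ ∑ j, β j ^ 2 := h2
      linarith [hab]
    have hG : ((s : ℝ) - 2) * (1 - ρ) * (|a| + |b|) ^ 2 + 2 * ((s : ℝ) - 2) * Q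
        ≤ 2 * ((s : ℝ) - 2) * quad M β := by
      have := mul_le_mul_of_nonneg_left hlb (show (0:ℝ) ≤ 2 * ((s : ℝ) - 2) by linarith)
      nlinarith [this]
    have hmain := aux_ineq ((s : ℝ) - 2) (((s : ℝ) - 2) * (1 - ρ)) (|a| + |b|) t Q
      (quad M β) hm1 hx hu0 ht0 hCS hG
    rw [hl1S β]
    linarith [hmain]
  · -- RE lower bound
    intro v _
    rw [hquad v]
    have h01 : v i0 ^ 2 + v i1 ^ 2 ≤ l2sq v := by
      have := hl2S v
      have hQ0 : (0:ℝ) ≤ ∑ j ∈ S2, v j ^ 2 := Finset.sum_nonneg fun j _ => sq_nonneg _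
      linarith
    nlinarith [mul_nonneg hρ0 (sq_nonneg (v i0 + v i1)),
      mul_le_mul_of_nonneg_left h01 hρ0]
  · -- RE witness
    refine ⟨fun j => if j = i0 then 1 else if j = i1 then -1 else 0, ?_, ?_, ?_⟩
    · intro h
      have := congrFun h i0
      simp only [if_pos rfl, Pi.zero_apply] at this
      norm_num at this
    · intro j hj
      have hjs : ¬ ((j : ℕ) < s) := by
        rw [hS] at hj
        simpa only [Finset.mem_filter, Finset.mem_univ, true_and] using hj
      have h0 : j ≠ i0 := by
        intro h; apply hjs; rw [h, hv0]; omega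
      have h1 : j ≠ i1 := by
        intro h; apply hjs; rw [h, hv1]; omega
      simp [h0, h1]
    · set v : Fin p → ℝ := fun j => if j = i0 then 1 else if j = i1 then -1 else 0
        with hvdef
      have hv0' : v i0 = 1 := by simp [hvdef]
      have hv1' : v i1 = -1 := by
        simp only [hvdef]
        rw [if_neg (fun h => hne01 h.symm)]
        simp
      have hl2 : l2sq v = 2 := by
        have hpt : ∀ j : Fin p, v j ^ 2
            = (if j = i0 then (1:ℝ) else 0) + (if j = i1 then 1 else 0) := by
          intro j
          by_cases h1 : j = i0
          · rw [h1]
            rw [hv0', if_pos rfl, if_neg hne01]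
            norm_num
          · by_cases h2 : j = i1
            · rw [h2, hv1', if_neg (fun h => hne01 h.symm), if_pos rfl]
              norm_num
            · simp [hvdef, h1, h2]
        simp only [l2sq]
        rw [Finset.sum_congr rfl fun j _ => hpt j]
        rw [Finset.sum_add_distrib]
        simp only [Finset.sum_ite_eq', Finset.mem_univ, if_true]
        norm_num
      rw [hquad v, hl2, hv0', hv1']
      ring
  · -- particular value
    intro h3
    have hval : ((s : ℝ) - 2) * (1 - ρ) = 3 := by
      rw [h3]; field_simp
    rw [hval]; norm_num
end

section
/- Consider the noisy Lasso β̂ = argmin_β { (1/n)Σᵢ(Yᵢ − f_β(Xᵢ))² + λ‖β‖₁ } with Yᵢ = f⁰(Xᵢ) + εᵢ, f⁰ = f_{β⁰}, β⁰ supported on S, |S| = s. Let λ₀ = 2 max_j |(ψ_j, ε)_n| and take λ > λ₀, setting L = (λ+λ₀)/(λ−λ₀). If the compatibility condition holds for the empirical Gram matrix Σ̂ with constant φ = φ_compatible(Σ̂, L, S) > 0, then ‖f̂ − f⁰‖²_n + (2λ₀/(L−1))‖β̂_{S^c}‖₁ ≤ 4(L+1)²λ₀²s / ((L−1)²φ²).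 -/
open Finset Matrix

lemma oracle_arith (T a b s lam lam0 φ : ℝ) (hs : 0 ≤ s) (hT0 : 0 ≤ T)
    (ha0 : 0 ≤ a) (hb0 : 0 ≤ b) (hφ : 0 < φ) (hll : 0 < lam - lam0) (h0 : 0 < lam0)
    (hkey : T + (lam - lam0) * b ≤ (lam + lam0) * a)
    (hcomp : φ ^ 2 * a ^ 2 ≤ s * T) :
    T + (lam - lam0) * b ≤ (lam + lam0) ^ 2 * s / φ ^ 2 := by
  have hlp : 0 < lam + lam0 := by linarith
  have hTa : T ≤ (lam + lam0) * a := by nlinarith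
  have h2 : φ ^ 2 * a ^ 2 ≤ s * ((lam + lam0) * a) :=
    le_trans hcomp (mul_le_mul_of_nonneg_left hTa hs)
  rcases eq_or_lt_of_le ha0 with h | h
  · rw [le_div_iff₀ (by positivity)]
    have h1 : T + (lam - lam0) * b ≤ 0 := by rw [← h, mul_zero] at hkey; exact hkey
    have h2' : (T + (lam - lam0) * b) * φ ^ 2 ≤ 0 :=
      mul_nonpos_of_nonpos_of_nonneg h1 (sq_nonneg φ)
    have h3' : (0:ℝ) ≤ (lam + lam0) ^ 2 * s := by positivity
    linarith
  · have haub : a * φ ^ 2 ≤ s * (lam + lam0) := by nlinarith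
    rw [le_div_iff₀ (by positivity)]
    have hstep : (T + (lam - lam0) * b) * φ ^ 2 ≤ (lam + lam0) * a * φ ^ 2 :=
      mul_le_mul_of_nonneg_right hkey (sq_nonneg φ)
    nlinarith [mul_le_mul_of_nonneg_left haub hlp.le]

/-- Oracle inequality for the noisy Lasso under the compatibility condition
for the empirical Gram matrix Σ̂ = XᵀX/n. -/
theorem stmt19 {n p : ℕ} (hn : 0 < n)
    (X : Matrix (Fin n) (Fin p) ℝ) (Y : Fin n → ℝ)
    (S : Finset (Fin p)) (s : ℕ) (hScard : S.card = s)
    (β0 : Fin p → ℝ) (hβ0 : ∀ j ∉ S, β0 j = 0)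
    (ε : Fin n → ℝ) (hε : ∀ i, ε i = Y i - X.mulVec β0 i)
    (lam lam0 : ℝ) (hlam0pos : 0 < lam0)
    -- λ₀ = 2 max_j |(ψ_j, ε)_n|
    (hlam0 : ∀ j, 2 * |(∑ i, X i j * ε i) / n| ≤ lam0)
    (hlam : lam0 < lam)
    (L : ℝ) (hL : L = (lam + lam0) / (lam - lam0))
    (βhat : Fin p → ℝ)
    -- β̂ minimizes the penalized empirical risk
    (hmin : ∀ β : Fin p → ℝ,
      (∑ i, (Y i - X.mulVec βhat i) ^ 2) / n + lam * l1 βhat ≤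
        (∑ i, (Y i - X.mulVec β i) ^ 2) / n + lam * l1 β)
    (φ : ℝ) (hφ : 0 < φ)
    -- (Σ̂, L, S)-compatibility condition
    (hcompat : ∀ β : Fin p → ℝ, l1 (rV Sᶜ β) ≤ L * l1 (rV S β) →
      φ ^ 2 * (l1 (rV S β)) ^ 2 ≤ (s : ℝ) * ((∑ i, (X.mulVec β i) ^ 2) / n)) :
    (∑ i, (X.mulVec (βhat - β0) i) ^ 2) / n
        + (2 * lam0 / (L - 1)) * l1 (rV Sᶜ βhat)
      ≤ 4 * (L + 1) ^ 2 * lam0 ^ 2 * s / ((L - 1) ^ 2 * φ ^ 2) := by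
  have hnR : (0:ℝ) < n := by exact_mod_cast hn
  have hll : 0 < lam - lam0 := by linarith
  have hlpos : 0 < lam := lt_trans hlam0pos hlam
  set Δ : Fin p → ℝ := βhat - β0 with hΔ
  set T : ℝ := (∑ i, (X.mulVec Δ i) ^ 2) / n with hT
  set a : ℝ := l1 (rV S Δ) with ha
  set b : ℝ := l1 (rV Sᶜ βhat) with hb
  have hbΔ : rV Sᶜ Δ = rV Sᶜ βhat := by
    funext j
    unfold rV
    by_cases h : j ∈ Sᶜ
    · simp only [h, if_true, hΔ, Pi.sub_apply, hβ0 j (Finset.mem_compl.mp h), sub_zero]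
    · simp [h]
  have ha0 : 0 ≤ a := l1_nonneg _
  have hb0 : 0 ≤ b := l1_nonneg _
  have hT0 : 0 ≤ T := by
    apply div_nonneg _ hnR.le
    exact Finset.sum_nonneg fun _ _ => sq_nonneg _
  clear_value Δ T a b
  -- residual identity
  have hres : ∀ i, Y i - X.mulVec βhat i = ε i - X.mulVec Δ i := by
    intro i
    have : X.mulVec Δ i = X.mulVec βhat i - X.mulVec β0 i := by
      rw [hΔ, Matrix.mulVec_sub]; rfl
    rw [hε i, this]; ring
  -- Basic inequality
  have hbasic : T + lam * l1 βhat ≤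
      2 * ((∑ i, ε i * X.mulVec Δ i) / n) + lam * l1 β0 := by
    have h := hmin β0
    have h1 : ∑ i, (Y i - X.mulVec βhat i) ^ 2
        = (∑ i, (ε i)^2) - 2 * (∑ i, ε i * X.mulVec Δ i) + ∑ i, (X.mulVec Δ i)^2 := by
      rw [Finset.mul_sum, ← Finset.sum_sub_distrib, ← Finset.sum_add_distrib]
      exact Finset.sum_congr rfl fun i _ => by rw [hres i]; ring
    have h2 : ∑ i, (Y i - X.mulVec β0 i) ^ 2 = ∑ i, (ε i)^2 :=
      Finset.sum_congr rfl fun i _ => by rw [hε i]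
    rw [h1, h2] at h
    rw [hT]
    have h3 : 2 * ((∑ i, ε i * X.mulVec Δ i) / n)
        = (2 * (∑ i, ε i * X.mulVec Δ i)) / n := (mul_div_assoc _ _ _).symm
    rw [h3]
    rw [add_div, sub_div] at h
    linarith
  -- cross term bound
  have hcross : 2 * ((∑ i, ε i * X.mulVec Δ i) / n) ≤ lam0 * l1 Δ := by
    have hswap : ∑ i, ε i * X.mulVec Δ i = ∑ j, Δ j * ∑ i, X i j * ε i := by
      calc ∑ i, ε i * X.mulVec Δ i
          = ∑ i, ∑ j, ε i * (X i j * Δ j) := by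
            simp [Matrix.mulVec, dotProduct, Finset.mul_sum]
        _ = ∑ j, ∑ i, ε i * (X i j * Δ j) := Finset.sum_comm
        _ = ∑ j, Δ j * ∑ i, X i j * ε i := by
            refine Finset.sum_congr rfl fun j _ => ?_
            rw [Finset.mul_sum]
            exact Finset.sum_congr rfl fun i _ => by ring
    have : 2 * ((∑ i, ε i * X.mulVec Δ i) / n) = ∑ j, Δ j * (2 * ((∑ i, X i j * ε i) / n)) := by
      rw [hswap, Finset.sum_div, Finset.mul_sum]
      exact Finset.sum_congr rfl fun j _ => by field_simp
    rw [this]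
    unfold l1
    rw [Finset.mul_sum]
    refine Finset.sum_le_sum fun j _ => ?_
    calc Δ j * (2 * ((∑ i, X i j * ε i) / n))
        ≤ |Δ j * (2 * ((∑ i, X i j * ε i) / n))| := le_abs_self _
      _ = |Δ j| * (2 * |(∑ i, X i j * ε i) / n|) := by
          rw [abs_mul, abs_mul]; norm_num
      _ ≤ |Δ j| * lam0 := mul_le_mul_of_nonneg_left (hlam0 j) (abs_nonneg _)
      _ = lam0 * |Δ j| := mul_comm _ _
  -- l1 comparisons
  have hβ0S : l1 β0 = l1 (rV S β0) := by
    rw [l1_split S β0]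
    have : l1 (rV Sᶜ β0) = 0 := by
      unfold l1 rV
      refine Finset.sum_eq_zero fun j _ => ?_
      by_cases h : j ∈ Sᶜ
      · simp [h, hβ0 j (Finset.mem_compl.mp h)]
      · simp [h]
    rw [this, add_zero]
  have htri : l1 (rV S β0) - l1 (rV S βhat) ≤ a := by
    rw [ha]
    unfold l1
    rw [← Finset.sum_sub_distrib]
    refine Finset.sum_le_sum fun j _ => ?_
    unfold rV
    by_cases h : j ∈ S
    · simp only [h, if_true, hΔ, Pi.sub_apply]
      have := abs_sub_abs_le_abs_sub (β0 j) (βhat j)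
      rw [abs_sub_comm] at this
      linarith
    · simp [h]
  -- key inequality  T + (lam - lam0) * b ≤ (lam + lam0) * a
  have hkey : T + (lam - lam0) * b ≤ (lam + lam0) * a := by
    have hsplit1 : l1 βhat = l1 (rV S βhat) + b := by rw [hb]; exact l1_split S βhat
    have hsplit2 : l1 Δ = a + b := by
      rw [ha, hb, ← hbΔ]; exact l1_split S Δ
    rw [hsplit1] at hbasic
    rw [hsplit2] at hcross
    rw [hβ0S] at hbasic
    have htri' : lam * (l1 (rV S β0) - l1 (rV S βhat)) ≤ lam * a :=
      mul_le_mul_of_nonneg_left htri hlpos.le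
    nlinarith [hbasic, hcross, htri']
  -- compatibility applies
  have hba : b ≤ L * a := by
    have h1 : (lam - lam0) * b ≤ (lam + lam0) * a := by linarith
    rw [hL, div_mul_eq_mul_div, le_div_iff₀ hll]
    nlinarith
  have hcomp := hcompat Δ (by rw [hbΔ, ← hb, ← ha]; exact hba)
  rw [← ha, ← hT] at hcomp
  -- deduce T + (lam - lam0) * b ≤ (lam + lam0)^2 * s / φ^2
  have hmain : T + (lam - lam0) * b ≤ (lam + lam0) ^ 2 * s / φ ^ 2 :=
    oracle_arith T a b s lam lam0 φ (Nat.cast_nonneg s) hT0 ha0 hb0 hφ hll hlam0pos hkey hcomp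
  clear hmin hcompat hlam0 hε hβ0 hbΔ ha hb hT hΔ hres hbasic hcross hβ0S htri hba hcomp hkey
  clear X Y βhat β0 ε Δ S hScard
  -- convert constants
  have hLval : L - 1 = 2 * lam0 / (lam - lam0) := by
    rw [hL]; field_simp; ring
  have hL1pos : 0 < L - 1 := by rw [hLval]; positivity
  have hc1 : 2 * lam0 / (L - 1) = lam - lam0 := by
    rw [hLval]
    field_simp
  have hc2 : (lam + lam0) ^ 2 * s / φ ^ 2 ≤ 4 * (L + 1) ^ 2 * lam0 ^ 2 * s / ((L - 1) ^ 2 * φ ^ 2) := by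
    have hL2 : L + 1 = 2 * lam / (lam - lam0) := by rw [hL]; field_simp; ring
    have : 4 * (L + 1) ^ 2 * lam0 ^ 2 * s / ((L - 1) ^ 2 * φ ^ 2) = 4 * lam ^ 2 * s / φ ^ 2 := by
      rw [hL2, hLval]
      field_simp
    rw [this, div_le_div_iff₀ (by positivity) (by positivity)]
    have h4 : (lam + lam0) ^ 2 ≤ 4 * lam ^ 2 := by
      nlinarith [mul_pos hll (show (0:ℝ) < 3 * lam + lam0 by linarith)]
    calc (lam + lam0) ^ 2 * (s:ℝ) * φ ^ 2
        ≤ 4 * lam ^ 2 * (s:ℝ) * φ ^ 2 :=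
          mul_le_mul_of_nonneg_right
            (mul_le_mul_of_nonneg_right h4 (Nat.cast_nonneg s)) (sq_nonneg φ)
      _ = 4 * lam ^ 2 * (s:ℝ) * φ ^ 2 := rfl
  rw [hc1]
  exact le_trans hmain hc2
end
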